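/- arXiv:2307.03064 — 3 statements merged into one kernel-verified Lean document; each statement's English description precedes it below -/
import Mathlib

section
/- Let A, B be n×n positive semidefinite matrices and X, Y ∈ M_n(ℂ) with X*X + Y*Y = XX* + YY* = I. Then det(X*AX + Y*BY) · det(Y*AY + X*BX) ≥ det A · det B. -/
open Matrix ComplexOrder

open scoped MatrixOrder in
/-- square root of a PSD matrix. -/
noncomputable def Matrix.PosSemidef.sqrt {n : Type*} [Fintype n] [DecidableEq n]
    {M : Matrix n n ℂ} (_hM : M.PosSemidef) : Matrix n n ℂ :=
  CFC.sqrt M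

open scoped MatrixOrder in
lemma Matrix.PosSemidef.posSemidef_sqrt {n : Type*} [Fintype n] [DecidableEq n]
    {M : Matrix n n ℂ} (hM : M.PosSemidef) : hM.sqrt.PosSemidef :=
  Matrix.nonneg_iff_posSemidef.mp (CFC.sqrt_nonneg M)

open scoped MatrixOrder in
lemma Matrix.PosSemidef.sqrt_mul_self {n : Type*} [Fintype n] [DecidableEq n]
    {M : Matrix n n ℂ} (hM : M.PosSemidef) : hM.sqrt * hM.sqrt = M :=
  CFC.sqrt_mul_sqrt_self M hM.nonneg

namespace BourinLee

variable {n : Type*} [Fintype n] [DecidableEq n]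

/-- det of PSD matrix is a nonneg real. -/
lemma psd_det_nonneg {M : Matrix n n ℂ} (hM : M.PosSemidef) : 0 ≤ M.det := by
  rw [hM.1.det_eq_prod_eigenvalues]
  exact Finset.prod_nonneg fun i _ => RCLike.ofReal_nonneg.mpr (hM.eigenvalues_nonneg i)

/-- PSD with invertible det is PosDef. -/
lemma posDef_of_posSemidef_det_ne_zero {M : Matrix n n ℂ} (hM : M.PosSemidef)
    (hd : M.det ≠ 0) : M.PosDef := by
  refine PosDef.of_dotProduct_mulVec_pos hM.1 fun x hx => ?_
  refine lt_of_le_of_ne (hM.dotProduct_mulVec_nonneg x) fun heq => hx ?_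
  have h0 : M *ᵥ x = 0 := (hM.dotProduct_mulVec_zero_iff x).mp heq.symm
  have : Function.Injective (M.mulVec) := mulVec_injective_iff_isUnit.mpr
    ((Matrix.isUnit_iff_isUnit_det M).mpr (isUnit_iff_ne_zero.mpr hd))
  have := this (a₁ := x) (a₂ := 0) (by simpa using h0)
  exact this

/-- conjugation of PosDef by a matrix with invertible det. -/
lemma posDef_conj {M U : Matrix n n ℂ} (hM : M.PosDef) (hU : U.det ≠ 0) :
    (Uᴴ * M * U).PosDef := by
  refine posDef_of_posSemidef_det_ne_zero (hM.posSemidef.conjTranspose_mul_mul_same U) ?_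
  rw [det_mul, det_mul, det_conjTranspose]
  have : M.det ≠ 0 := hM.det_pos.ne'
  simp only [ne_eq, mul_eq_zero, not_or]
  exact ⟨⟨by simpa using hU, this⟩, hU⟩

/-- det is invariant under unitary conjugation. -/
lemma det_conj_unitary {V M : Matrix n n ℂ} (hV : V * Vᴴ = 1) :
    (V * M * Vᴴ).det = M.det := by
  rw [det_mul_right_comm, hV, one_mul]

/-- `det (1 + N) ≥ 1` for `N` PSD. -/
lemma one_le_det_one_add {N : Matrix n n ℂ} (hN : N.PosSemidef) : 1 ≤ (1 + N).det := by
  have hH := hN.1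
  have hspec := hH.spectral_theorem
  set V : Matrix n n ℂ := (hH.eigenvectorUnitary : Matrix n n ℂ)
  have hVV : V * Vᴴ = 1 := by
    simpa [Matrix.star_eq_conjTranspose] using (Matrix.mem_unitaryGroup_iff).mp hH.eigenvectorUnitary.2
  have h1 : (1 : Matrix n n ℂ) = V * 1 * Vᴴ := by rw [Matrix.mul_one, hVV]
  have hNV : N = V * diagonal (RCLike.ofReal ∘ hH.eigenvalues) * Vᴴ := by
    simpa [Matrix.star_eq_conjTranspose] using hspec
  have key : 1 + N = V * (1 + diagonal (RCLike.ofReal ∘ hH.eigenvalues)) * Vᴴ := by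
    rw [Matrix.mul_add, Matrix.add_mul, ← h1, ← hNV]
  rw [key, det_conj_unitary hVV]
  have : (1 : Matrix n n ℂ) + diagonal (RCLike.ofReal ∘ hH.eigenvalues)
      = diagonal (fun i => 1 + (hH.eigenvalues i : ℂ)) := by
    rw [← diagonal_one, diagonal_add]
    rfl
  rw [this, det_diagonal]
  have := Finset.prod_le_prod (s := (Finset.univ : Finset n))
    (f := fun _ => (1:ℂ)) (g := fun i => 1 + (hH.eigenvalues i : ℂ))
    (fun i _ => zero_le_one) (fun i _ => by
      have h0 := (RCLike.ofReal_nonneg (K := ℂ)).mpr (hN.eigenvalues_nonneg i)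
      calc (1:ℂ) = 1 + 0 := by ring
      _ ≤ 1 + (hH.eigenvalues i : ℂ) := add_le_add_right h0 1)
  simpa using this

/-- Monotonicity: `det K ≤ det (K + N)` for `K` PosDef, `N` PSD. -/
lemma det_le_det_add {K N : Matrix n n ℂ} (hK : K.PosDef) (hN : N.PosSemidef) :
    K.det ≤ (K + N).det := by
  set W : Matrix n n ℂ := hK.posSemidef.sqrt with hWdef
  have hW : W.PosSemidef := hK.posSemidef.posSemidef_sqrt
  have hWW : W * W = K := hK.posSemidef.sqrt_mul_self
  have hdetWW : W.det * W.det = K.det := by rw [← det_mul, hWW]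
  have hdW : W.det ≠ 0 := fun h => by
    rw [h, mul_zero] at hdetWW; exact hK.det_pos.ne' hdetWW.symm
  have hWu : IsUnit W.det := isUnit_iff_ne_zero.mpr hdW
  have hWinv : W * W⁻¹ = 1 := mul_nonsing_inv W hWu
  have hWinv' : W⁻¹ * W = 1 := nonsing_inv_mul W hWu
  have hWHi : (W⁻¹)ᴴ = W⁻¹ := by rw [conjTranspose_nonsing_inv, hW.1.eq]
  have hC : ((W⁻¹)ᴴ * N * W⁻¹).PosSemidef := hN.conjTranspose_mul_mul_same W⁻¹
  rw [hWHi] at hC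
  have key : K + N = W * (1 + W⁻¹ * N * W⁻¹) * W := by
    rw [Matrix.mul_add, Matrix.add_mul, Matrix.mul_one, hWW]
    congr 1
    symm
    calc W * (W⁻¹ * N * W⁻¹) * W = (W * W⁻¹) * N * (W⁻¹ * W) := by
          simp only [Matrix.mul_assoc]
    _ = N := by rw [hWinv, hWinv', Matrix.one_mul, Matrix.mul_one]
  rw [key, det_mul, det_mul, mul_comm W.det, mul_assoc, ← det_mul, hWW]
  calc K.det = 1 * K.det := (one_mul _).symm
  _ ≤ (1 + W⁻¹ * N * W⁻¹).det * K.det :=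
      mul_le_mul_of_nonneg_right (one_le_det_one_add hC) (psd_det_nonneg hK.posSemidef)

/-- Block Cauchy–Schwarz for determinants. -/
lemma det_sq_le_of_fromBlocks_posSemidef {P Z Q : Matrix n n ℂ}
    (hP : P.PosDef) (hZ : Z.PosDef) (hQ : Q.PosSemidef)
    (hblk : (fromBlocks P Z Zᴴ Q).PosSemidef) : Z.det * Z.det ≤ P.det * Q.det := by
  have hPu : IsUnit P.det := isUnit_iff_ne_zero.mpr hP.det_pos.ne'
  haveI : Invertible P := P.invertibleOfIsUnitDet hPu
  have hschur : (Q - Zᴴ * P⁻¹ * Z).PosSemidef :=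
    (PosDef.fromBlocks₁₁ Z Q hP).mp hblk
  have hPinv : P⁻¹.PosDef := hP.inv
  have hZd : Z.det ≠ 0 := hZ.det_pos.ne'
  have hK : (Zᴴ * P⁻¹ * Z).PosDef := posDef_conj hPinv hZd
  have h1 : (Zᴴ * P⁻¹ * Z).det ≤ Q.det := by
    have := det_le_det_add hK hschur
    rwa [add_sub_cancel] at this
  have hdetK : (Zᴴ * P⁻¹ * Z).det = Z.det * Z.det * P.det⁻¹ := by
    rw [hZ.1.eq, det_mul, det_mul, det_nonsing_inv, Ring.inverse_eq_inv']
    ring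
  rw [hdetK] at h1
  have hPpos : 0 ≤ P.det := psd_det_nonneg hP.posSemidef
  calc Z.det * Z.det = (Z.det * Z.det * P.det⁻¹) * P.det := by
        rw [mul_assoc, inv_mul_cancel₀ hP.det_pos.ne', mul_one]
  _ ≤ Q.det * P.det := mul_le_mul_of_nonneg_right h1 hPpos
  _ = P.det * Q.det := mul_comm _ _

lemma psd_smul {R : Matrix n n ℂ} (hR : R.PosSemidef) {c : ℝ} (hc : 0 ≤ c) :
    ((c : ℂ) • R).PosSemidef := by
  refine PosSemidef.of_dotProduct_mulVec_nonneg ?_ ?_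
  · rw [IsHermitian, conjTranspose_smul, hR.1.eq]
    congr 1
    simp
  · intro x
    rw [smul_mulVec, dotProduct_smul]
    exact mul_nonneg (by exact_mod_cast hc) (hR.dotProduct_mulVec_nonneg x)

lemma psd_sum {ι : Type*} (s : Finset ι) (f : ι → Matrix n n ℂ)
    (hf : ∀ i ∈ s, (f i).PosSemidef) : (∑ i ∈ s, f i).PosSemidef := by
  exact Finset.sum_induction f _ (fun a b ha hb => ha.add hb) Matrix.PosSemidef.zero hf

lemma psd_trace_nonneg {M : Matrix n n ℂ} (hM : M.PosSemidef) : 0 ≤ M.trace := by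
  rw [Matrix.trace]
  refine Finset.sum_nonneg fun i _ => ?_
  have := hM.dotProduct_mulVec_nonneg (Pi.single i 1)
  simpa [Matrix.mulVec_single, dotProduct, Pi.single_apply, apply_ite] using this

lemma psd_mul_trace_nonneg {R S : Matrix n n ℂ} (hR : R.PosSemidef) (hS : S.PosSemidef) :
    0 ≤ (R * S).trace := by
  set W : Matrix n n ℂ := hR.sqrt with hWdef
  have hWW : W * W = R := hR.sqrt_mul_self
  have hWH : Wᴴ = W := hR.posSemidef_sqrt.1.eq
  have hpsd : (W * S * W).PosSemidef := by
    have := hS.conjTranspose_mul_mul_same W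
    rwa [hWH] at this
  have hRS : R * S = W * (W * S) := by rw [← hWW, Matrix.mul_assoc]
  rw [hRS, trace_mul_comm]
  exact psd_trace_nonneg hpsd

/-- real form of a complex number known to be ≥ 0 -/
lemma exists_real_of_nonneg {z : ℂ} (hz : 0 ≤ z) : ∃ r : ℝ, 0 ≤ r ∧ z = (r : ℂ) := by
  rw [Complex.le_def] at hz
  have him : z.im = 0 := by simpa using hz.2.symm
  refine ⟨z.re, by simpa using hz.1, ?_⟩
  exact (Complex.ext (by simp) (by simp [him])).symm

/-- Eigenvalue lower bound from a Loewner bound. -/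
lemma eigenvalues_ge_of_sub_psd {M : Matrix n n ℂ} (hM : M.IsHermitian) {a : ℝ}
    (h : (M - (a : ℂ) • 1).PosSemidef) (j : n) : a ≤ hM.eigenvalues j := by
  have hv := hM.mulVec_eigenvectorBasis j
  set v : n → ℂ := ⇑(hM.eigenvectorBasis j) with hvdef
  have hnorm : star v ⬝ᵥ v = 1 := by
    have h1 : (inner (𝕜 := ℂ) (hM.eigenvectorBasis j) (hM.eigenvectorBasis j)) = (1 : ℂ) := by
      rw [inner_self_eq_norm_sq_to_K, hM.eigenvectorBasis.orthonormal.1 j]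
      norm_num
    rw [EuclideanSpace.inner_eq_star_dotProduct, dotProduct_comm] at h1
    simpa using h1
  have h2 := h.dotProduct_mulVec_nonneg v
  have hv' : M *ᵥ v = (hM.eigenvalues j : ℂ) • v := by
    rw [hv, RCLike.real_smul_eq_coe_smul (K := ℂ)]
    rfl
  rw [sub_mulVec, dotProduct_sub, hv', smul_mulVec, one_mulVec,
    dotProduct_smul, dotProduct_smul, hnorm] at h2
  simp only [smul_eq_mul, mul_one] at h2
  rw [sub_nonneg] at h2
  exact_mod_cast h2

lemma quad_conj (A M : Matrix n n ℂ) (x : n → ℂ) :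
    star x ⬝ᵥ ((Mᴴ * A * M) *ᵥ x) = star (M *ᵥ x) ⬝ᵥ (A *ᵥ (M *ᵥ x)) := by
  rw [← mulVec_mulVec, ← mulVec_mulVec, dotProduct_mulVec, ← star_mulVec]

lemma posDef_conj_add {A B X Y : Matrix n n ℂ} (hA : A.PosDef) (hB : B.PosDef)
    (h1 : Xᴴ * X + Yᴴ * Y = 1) : (Xᴴ * A * X + Yᴴ * B * Y).PosDef := by
  refine PosDef.of_dotProduct_mulVec_pos ?_ ?_
  · exact ((isHermitian_conjTranspose_mul_mul X hA.1).add
      (isHermitian_conjTranspose_mul_mul Y hB.1))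
  · intro x hx
    rw [add_mulVec, dotProduct_add, quad_conj, quad_conj]
    have hne : X *ᵥ x ≠ 0 ∨ Y *ᵥ x ≠ 0 := by
      by_contra hcon
      push_neg at hcon
      apply hx
      have : (Xᴴ * X + Yᴴ * Y) *ᵥ x = x := by rw [h1, one_mulVec]
      rw [add_mulVec, ← mulVec_mulVec, ← mulVec_mulVec, hcon.1, hcon.2] at this
      simpa using this.symm
    rcases hne with h | h
    · exact add_pos_of_pos_of_nonneg (hA.dotProduct_mulVec_pos h) ((hB.posSemidef.conjTranspose_mul_mul_same Y).dotProduct_mulVec_nonneg x |>.trans_eq (quad_conj B Y x))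
    · exact add_pos_of_nonneg_of_pos ((hA.posSemidef.conjTranspose_mul_mul_same X).dotProduct_mulVec_nonneg x |>.trans_eq (quad_conj A X x)) (hB.dotProduct_mulVec_pos h)

lemma star_mul_self_unitary {M : Matrix n n ℂ} (hM : M.IsHermitian) :
    (hM.eigenvectorUnitary : Matrix n n ℂ)ᴴ * (hM.eigenvectorUnitary : Matrix n n ℂ) = 1 ∧
    (hM.eigenvectorUnitary : Matrix n n ℂ) * (hM.eigenvectorUnitary : Matrix n n ℂ)ᴴ = 1 := by
  have h := hM.eigenvectorUnitary.2
  rw [Unitary.mem_iff] at h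
  constructor
  · simpa [Matrix.star_eq_conjTranspose] using h.1
  · simpa [Matrix.star_eq_conjTranspose] using h.2

lemma trace_eq_sum_eigenvalues {M : Matrix n n ℂ} (hM : M.IsHermitian) :
    M.trace = ∑ j, (hM.eigenvalues j : ℂ) := by
  obtain ⟨hsu, hus⟩ := star_mul_self_unitary hM
  conv_lhs => rw [hM.spectral_theorem, Unitary.conjStarAlgAut_apply]
  rw [Matrix.star_eq_conjTranspose] at *
  rw [trace_mul_cycle, hsu, Matrix.one_mul, trace_diagonal]
  rfl

lemma trace_sub_one_sq {M : Matrix n n ℂ} (hM : M.IsHermitian) :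
    ((M - 1) * (M - 1)).trace = ∑ j, (((hM.eigenvalues j - 1 : ℝ)) ^ 2 : ℂ) := by
  obtain ⟨hsu, hus⟩ := star_mul_self_unitary hM
  set V : Matrix n n ℂ := (hM.eigenvectorUnitary : Matrix n n ℂ) with hV
  set D : Matrix n n ℂ := diagonal (RCLike.ofReal ∘ hM.eigenvalues) with hD
  have hspec : M = V * D * Vᴴ := by
    have := hM.spectral_theorem
    rwa [Unitary.conjStarAlgAut_apply, Matrix.star_eq_conjTranspose] at this
  have hsub : M - 1 = V * (D - 1) * Vᴴ := by
    rw [Matrix.mul_sub, Matrix.sub_mul, Matrix.mul_one, hus, ← hspec]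
  have hprod : (M - 1) * (M - 1) = V * ((D - 1) * (D - 1)) * Vᴴ := by
    rw [hsub]
    calc V * (D - 1) * Vᴴ * (V * (D - 1) * Vᴴ)
        = V * (D - 1) * (Vᴴ * V) * (D - 1) * Vᴴ := by simp only [Matrix.mul_assoc]
    _ = V * ((D - 1) * (D - 1)) * Vᴴ := by rw [hsu]; simp only [Matrix.mul_one, Matrix.mul_assoc]
  have hDD : (D - 1) * (D - 1) = diagonal (fun j => ((hM.eigenvalues j - 1 : ℝ) ^ 2 : ℂ)) := by
    rw [hD, ← diagonal_one, diagonal_sub, diagonal_mul_diagonal]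
    congr 1
    funext j
    simp only [Function.comp_apply]
    push_cast
    ring_nf
    rfl
  rw [hprod, trace_mul_cycle, hsu, Matrix.one_mul, hDD, trace_diagonal]

section Core

variable [Nonempty n] {lam : n → ℝ} {R : n → Matrix n n ℂ}

/-- The matrix path `M t = ∑ λᵢ^t Rᵢ`. -/
noncomputable def Mt (lam : n → ℝ) (R : n → Matrix n n ℂ) (t : ℝ) : Matrix n n ℂ :=
  ∑ i, ((lam i ^ t : ℝ) : ℂ) • R i

lemma Mt_psd (hlam : ∀ i, 0 < lam i) (hR : ∀ i, (R i).PosSemidef) (t : ℝ) :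
    (Mt lam R t).PosSemidef :=
  psd_sum _ _ fun i _ => psd_smul (hR i) (Real.rpow_nonneg (hlam i).le t)

lemma Mt_zero (hsum : ∑ i, R i = 1) : Mt lam R 0 = 1 := by
  rw [Mt]
  simp only [Real.rpow_zero, Complex.ofReal_one, one_smul]
  exact hsum

/-- uniform lower bound for the scalars. -/
noncomputable def aa (lam : n → ℝ) : ℝ :=
  Finset.univ.inf' Finset.univ_nonempty fun i => min (lam i) 1

lemma aa_pos (hlam : ∀ i, 0 < lam i) : 0 < aa lam := by
  rw [aa, Finset.lt_inf'_iff]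
  exact fun i _ => lt_min (hlam i) one_pos

lemma aa_le (hlam : ∀ i, 0 < lam i) {t : ℝ} (ht : 0 < t) (ht1 : t ≤ 1) (i : n) :
    aa lam ≤ lam i ^ t := by
  have hle : aa lam ≤ min (lam i) 1 := Finset.inf'_le _ (Finset.mem_univ i)
  rcases le_or_gt (lam i) 1 with h | h
  · refine hle.trans ((min_le_left _ _).trans ?_)
    calc lam i = lam i ^ (1:ℝ) := (Real.rpow_one _).symm
    _ ≤ lam i ^ t := Real.rpow_le_rpow_of_exponent_ge (hlam i) h ht1
  · refine hle.trans ((min_le_right _ _).trans ?_)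
    calc (1:ℝ) = 1 ^ t := (Real.one_rpow t).symm
    _ ≤ lam i ^ t := Real.rpow_le_rpow zero_le_one h.le ht.le

lemma Mt_sub_psd (hlam : ∀ i, 0 < lam i) (hR : ∀ i, (R i).PosSemidef)
    (hsum : ∑ i, R i = 1) {t : ℝ} (ht : 0 < t) (ht1 : t ≤ 1) :
    (Mt lam R t - ((aa lam : ℝ) : ℂ) • 1).PosSemidef := by
  have key : Mt lam R t - ((aa lam : ℝ) : ℂ) • 1
      = ∑ i, ((lam i ^ t - aa lam : ℝ) : ℂ) • R i := by
    rw [Mt, ← hsum, Finset.smul_sum, ← Finset.sum_sub_distrib]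
    congr 1
    funext i
    rw [← sub_smul]
    congr 1
    push_cast
    ring
  rw [key]
  exact psd_sum _ _ fun i _ => psd_smul (hR i) (sub_nonneg.mpr (aa_le hlam ht ht1 i))

lemma smul_one_posDef {c : ℝ} (hc : 0 < c) : (((c : ℝ) : ℂ) • (1 : Matrix n n ℂ)).PosDef := by
  have : ((c : ℝ) : ℂ) • (1 : Matrix n n ℂ) = diagonal fun _ => (c : ℂ) := by
    ext i j
    by_cases h : i = j <;> simp [h, Matrix.one_apply, diagonal]
  rw [this]
  refine Matrix.posDef_diagonal_iff.mpr fun i => ?_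
  exact_mod_cast Complex.zero_lt_real.mpr hc

lemma Mt_posDef (hlam : ∀ i, 0 < lam i) (hR : ∀ i, (R i).PosSemidef)
    (hsum : ∑ i, R i = 1) {t : ℝ} (ht0 : 0 ≤ t) (ht1 : t ≤ 1) :
    (Mt lam R t).PosDef := by
  rcases eq_or_lt_of_le ht0 with h | h
  · rw [← h, Mt_zero hsum]; exact Matrix.PosDef.one
  · have hkey : Mt lam R t = ((aa lam : ℝ) : ℂ) • 1 + (Mt lam R t - ((aa lam : ℝ) : ℂ) • 1) := by
      abel
    rw [hkey]
    exact (smul_one_posDef (aa_pos hlam)).add_posSemidef (Mt_sub_psd hlam hR hsum h ht1)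

/-- eigenvalue list of `Mt`. -/
noncomputable def mu (hlam : ∀ i, 0 < lam i) (hR : ∀ i, (R i).PosSemidef) (t : ℝ) (j : n) : ℝ :=
  (Mt_psd hlam hR t).1.eigenvalues j

/-- determinant as real number. -/
noncomputable def rho (hlam : ∀ i, 0 < lam i) (hR : ∀ i, (R i).PosSemidef) (t : ℝ) : ℝ :=
  ∏ j, mu hlam hR t j

variable (hlam : ∀ i, 0 < lam i) (hR : ∀ i, (R i).PosSemidef)

lemma det_Mt (t : ℝ) : (Mt lam R t).det = ((rho hlam hR t : ℝ) : ℂ) := by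
  rw [(Mt_psd hlam hR t).1.det_eq_prod_eigenvalues, rho]
  push_cast
  rfl

lemma mu_pos (hsum : ∑ i, R i = 1) {t : ℝ} (ht0 : 0 ≤ t) (ht1 : t ≤ 1) (j : n) :
    0 < mu hlam hR t j :=
  (Mt_posDef hlam hR hsum ht0 ht1).eigenvalues_pos j

lemma mu_ge (hsum : ∑ i, R i = 1) {t : ℝ} (ht : 0 < t) (ht1 : t ≤ 1) (j : n) :
    aa lam ≤ mu hlam hR t j :=
  eigenvalues_ge_of_sub_psd _ (Mt_sub_psd hlam hR hsum ht ht1) j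

lemma rho_pos (hsum : ∑ i, R i = 1) {t : ℝ} (ht0 : 0 ≤ t) (ht1 : t ≤ 1) :
    0 < rho hlam hR t :=
  Finset.prod_pos fun j _ => mu_pos hlam hR hsum ht0 ht1 j

lemma rho_zero (hsum : ∑ i, R i = 1) : rho hlam hR 0 = 1 := by
  have h := det_Mt hlam hR (lam := lam) (R := R) 0
  rw [Mt_zero hsum, det_one] at h
  exact_mod_cast h.symm

lemma trace_Mt (htr : ∀ i, (R i).trace = 1) (t : ℝ) :
    (Mt lam R t).trace = ((∑ i, lam i ^ t : ℝ) : ℂ) := by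
  rw [Mt, trace_sum]
  simp only [trace_smul, htr, smul_eq_mul, mul_one]
  push_cast
  rfl

lemma sum_mu (htr : ∀ i, (R i).trace = 1) (t : ℝ) :
    ∑ j, mu hlam hR t j = ∑ i, lam i ^ t := by
  have h1 := trace_eq_sum_eigenvalues (Mt_psd hlam hR t).1
  rw [trace_Mt htr] at h1
  have : ((∑ j, mu hlam hR t j : ℝ) : ℂ) = ((∑ i, lam i ^ t : ℝ) : ℂ) := by
    rw [h1]
    push_cast
    rfl
  exact_mod_cast this

/-- the real nonneg numbers `τ i j = tr (Rᵢ Rⱼ)`. -/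
lemma exists_tau (hR : ∀ i, (R i).PosSemidef) : ∃ τ : n → n → ℝ,
    (∀ i j, 0 ≤ τ i j) ∧ ∀ i j, ((R i) * (R j)).trace = ((τ i j : ℝ) : ℂ) := by
  have h := fun i j => exists_real_of_nonneg (psd_mul_trace_nonneg (hR i) (hR j))
  choose τ h0 h1 using fun i => fun j => h i j
  exact ⟨τ, h0, h1⟩

lemma sum_mu_sub_one_sq (hsum : ∑ i, R i = 1)
    {τ : n → n → ℝ} (hτ : ∀ i j, ((R i) * (R j)).trace = ((τ i j : ℝ) : ℂ)) (t : ℝ) :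
    ∑ j, (mu hlam hR t j - 1) ^ 2
      = ∑ i, ∑ j, (lam i ^ t - 1) * (lam j ^ t - 1) * τ i j := by
  have hexp : Mt lam R t - 1 = ∑ i, ((lam i ^ t - 1 : ℝ) : ℂ) • R i := by
    rw [Mt, ← hsum, ← Finset.sum_sub_distrib]
    congr 1
    funext i
    rw [Complex.ofReal_sub, sub_smul, Complex.ofReal_one, one_smul]
  have hmul : (Mt lam R t - 1) * (Mt lam R t - 1)
      = ∑ i, ∑ j, (((lam i ^ t - 1) * (lam j ^ t - 1) : ℝ) : ℂ) • ((R i) * (R j)) := by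
    rw [hexp, Finset.sum_mul_sum]
    congr 1
    funext i
    congr 1
    funext j
    rw [smul_mul_smul_comm]
    congr 1
    push_cast
    ring
  have h1 : ((Mt lam R t - 1) * (Mt lam R t - 1)).trace
      = ((∑ i, ∑ j, (lam i ^ t - 1) * (lam j ^ t - 1) * τ i j : ℝ) : ℂ) := by
    rw [hmul, trace_sum]
    simp only [trace_sum, trace_smul, hτ, smul_eq_mul]
    push_cast
    exact Finset.sum_congr rfl fun i _ => Finset.sum_congr rfl fun j _ => by ring
  have h2 := trace_sub_one_sq (Mt_psd hlam hR t).1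
  rw [h1] at h2
  have : ((∑ i, ∑ j, (lam i ^ t - 1) * (lam j ^ t - 1) * τ i j : ℝ) : ℂ)
      = ((∑ j, (mu hlam hR t j - 1) ^ 2 : ℝ) : ℂ) := by
    rw [h2]
    push_cast
    rfl
  exact_mod_cast this.symm

lemma quad_bound {τ : n → n → ℝ} (hτ0 : ∀ i j, 0 ≤ τ i j)
    (hrow : ∀ i, ∑ j, τ i j = 1) (hcol : ∀ j, ∑ i, τ i j = 1) (x : n → ℝ) :
    ∑ i, ∑ j, x i * x j * τ i j ≤ ∑ i, (x i) ^ 2 := by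
  have step : ∀ i j, x i * x j * τ i j ≤ ((x i) ^ 2 + (x j) ^ 2) / 2 * τ i j := by
    intro i j
    apply mul_le_mul_of_nonneg_right _ (hτ0 i j)
    nlinarith [sq_nonneg (x i - x j)]
  calc ∑ i, ∑ j, x i * x j * τ i j
      ≤ ∑ i, ∑ j, ((x i) ^ 2 + (x j) ^ 2) / 2 * τ i j :=
        Finset.sum_le_sum fun i _ => Finset.sum_le_sum fun j _ => step i j
  _ = (∑ i, ∑ j, (x i) ^ 2 / 2 * τ i j) + ∑ i, ∑ j, (x j) ^ 2 / 2 * τ i j := by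
        rw [← Finset.sum_add_distrib]
        congr 1
        funext i
        rw [← Finset.sum_add_distrib]
        congr 1
        funext j
        ring
  _ = (∑ i, (x i) ^ 2 / 2) + ∑ j, (x j) ^ 2 / 2 := by
        congr 1
        · congr 1
          funext i
          rw [← Finset.mul_sum, hrow i, mul_one]
        · rw [Finset.sum_comm]
          congr 1
          funext j
          rw [← Finset.mul_sum, hcol j, mul_one]
  _ = ∑ i, (x i) ^ 2 := by
        rw [← Finset.sum_add_distrib]
        congr 1
        funext i
        ring

lemma sum_fromBlocks {ι : Type*} (s : Finset ι)
    (A B C D : ι → Matrix n n ℂ) :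
    ∑ i ∈ s, fromBlocks (A i) (B i) (C i) (D i)
      = fromBlocks (∑ i ∈ s, A i) (∑ i ∈ s, B i) (∑ i ∈ s, C i) (∑ i ∈ s, D i) := by
  classical
  induction s using Finset.induction_on with
  | empty => ext (i | i) (j | j) <;> simp [fromBlocks]
  | insert a s' hnot ih =>
    rw [Finset.sum_insert hnot, Finset.sum_insert hnot, Finset.sum_insert hnot,
      Finset.sum_insert hnot, Finset.sum_insert hnot, ih]
    ext (i | i) (j | j) <;> simp [fromBlocks]

lemma smul_sqrt_mul {R₀ : Matrix n n ℂ} (h : R₀.PosSemidef) (a b : ℝ) :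
    (((a : ℝ) : ℂ) • h.sqrt)ᴴ * (((b : ℝ) : ℂ) • h.sqrt) = ((a * b : ℝ) : ℂ) • R₀ := by
  rw [conjTranspose_smul, h.posSemidef_sqrt.1.eq, Complex.star_def, Complex.conj_ofReal,
    smul_mul_smul_comm, h.sqrt_mul_self]
  congr 1
  push_cast
  ring

lemma rho_midpoint (hsum : ∑ i, R i = 1) {s u : ℝ}
    (hs0 : 0 ≤ s) (hs1 : s ≤ 1) (hu0 : 0 ≤ u) (hu1 : u ≤ 1) :
    rho hlam hR ((s + u) / 2) ^ 2 ≤ rho hlam hR s * rho hlam hR u := by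
  set m : ℝ := (s + u) / 2 with hm
  have hm0 : 0 ≤ m := by rw [hm]; linarith
  have hm1 : m ≤ 1 := by rw [hm]; linarith
  set U : n → Matrix (n ⊕ n) (n ⊕ n) ℂ := fun i =>
    fromBlocks (((lam i ^ (s/2) : ℝ) : ℂ) • (hR i).sqrt)
      (((lam i ^ (u/2) : ℝ) : ℂ) • (hR i).sqrt) 0 0 with hU
  have hterm : ∀ i, (U i)ᴴ * U i
      = fromBlocks (((lam i ^ s : ℝ) : ℂ) • R i) (((lam i ^ m : ℝ) : ℂ) • R i)
        (((lam i ^ m : ℝ) : ℂ) • R i) (((lam i ^ u : ℝ) : ℂ) • R i) := by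
    intro i
    rw [hU]
    rw [fromBlocks_conjTranspose, fromBlocks_multiply]
    simp only [Matrix.conjTranspose_zero, Matrix.zero_mul, Matrix.mul_zero, add_zero, zero_add]
    rw [smul_sqrt_mul (hR i), smul_sqrt_mul (hR i), smul_sqrt_mul (hR i), smul_sqrt_mul (hR i),
      ← Real.rpow_add (hlam i), ← Real.rpow_add (hlam i), ← Real.rpow_add (hlam i),
      ← Real.rpow_add (hlam i)]
    have e1 : s/2 + s/2 = s := by ring
    have e2 : s/2 + u/2 = m := by rw [hm]; ring
    have e3 : u/2 + s/2 = m := by rw [hm]; ring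
    have e4 : u/2 + u/2 = u := by ring
    rw [e1, e2, e3, e4]
  have key : fromBlocks (Mt lam R s) (Mt lam R m) (Mt lam R m)ᴴ (Mt lam R u)
      = ∑ i, (U i)ᴴ * U i := by
    have h2 : ∑ i, (U i)ᴴ * U i
        = fromBlocks (Mt lam R s) (Mt lam R m) (Mt lam R m) (Mt lam R u) := by
      rw [Finset.sum_congr rfl fun i _ => hterm i, sum_fromBlocks]
      rfl
    rw [h2, (Mt_psd hlam hR m).1.eq]
  have hblk : (fromBlocks (Mt lam R s) (Mt lam R m) (Mt lam R m)ᴴ (Mt lam R u)).PosSemidef := by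
    rw [key]
    exact psd_sum _ _ fun i _ => posSemidef_conjTranspose_mul_self (U i)
  have hdet := det_sq_le_of_fromBlocks_posSemidef (Mt_posDef hlam hR hsum hs0 hs1)
    (Mt_posDef hlam hR hsum hm0 hm1) (Mt_psd hlam hR u) hblk
  rw [det_Mt hlam hR, det_Mt hlam hR, det_Mt hlam hR] at hdet
  have : ((rho hlam hR m ^ 2 : ℝ) : ℂ) ≤ ((rho hlam hR s * rho hlam hR u : ℝ) : ℂ) := by
    push_cast
    calc ((rho hlam hR m : ℝ) : ℂ) ^ 2 = ((rho hlam hR m : ℝ) : ℂ) * ((rho hlam hR m : ℝ) : ℂ) := sq _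
    _ ≤ _ := hdet
  exact_mod_cast this

lemma rho_iter (hsum : ∑ i, R i = 1) (k : ℕ) :
    rho hlam hR ((1/2 : ℝ) ^ k) ^ (2 ^ k) ≤ rho hlam hR 1 := by
  induction k with
  | zero => simp
  | succ k ih =>
    have hδ0 : (0:ℝ) < (1/2 : ℝ) ^ k := pow_pos (by norm_num) k
    have hδ1 : ((1/2 : ℝ)) ^ k ≤ 1 := pow_le_one₀ (by norm_num) (by norm_num)
    have hmid := rho_midpoint hlam hR hsum (le_refl (0:ℝ)) zero_le_one hδ0.le hδ1
    rw [rho_zero hlam hR hsum, one_mul] at hmid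
    have hmm : ((0:ℝ) + (1/2)^k)/2 = (1/2 : ℝ)^(k+1) := by
      rw [zero_add, pow_succ]
      ring
    rw [hmm] at hmid
    calc rho hlam hR ((1/2:ℝ)^(k+1)) ^ 2 ^ (k+1)
        = (rho hlam hR ((1/2:ℝ)^(k+1)) ^ 2) ^ 2 ^ k := by
          rw [show 2^(k+1) = 2 * 2^k from by rw [pow_succ, Nat.mul_comm], pow_mul]
    _ ≤ rho hlam hR ((1/2:ℝ)^k) ^ 2 ^ k := pow_le_pow_left₀ (sq_nonneg _) hmid _
    _ ≤ rho hlam hR 1 := ih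

lemma log_rho_lower (hsum : ∑ i, R i = 1) (htr : ∀ i, (R i).trace = 1)
    {t : ℝ} (ht : 0 < t) (ht1 : t ≤ 1) :
    (∑ i, (lam i ^ t - 1)) - (∑ i, (lam i ^ t - 1) ^ 2) / aa lam
      ≤ Real.log (rho hlam hR t) := by
  obtain ⟨τ, hτ0, hτ⟩ := exists_tau hR
  have hrow : ∀ i, ∑ j, τ i j = 1 := by
    intro i
    have hc : ((∑ j, τ i j : ℝ) : ℂ) = ((1:ℝ) : ℂ) := by
      push_cast
      calc (∑ j, ((τ i j : ℝ) : ℂ)) = ∑ j, (R i * R j).trace := by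
            exact Finset.sum_congr rfl fun j _ => (hτ i j).symm
      _ = (R i * ∑ j, R j).trace := by rw [Finset.mul_sum, trace_sum]
      _ = 1 := by rw [hsum, Matrix.mul_one, htr i]
    exact_mod_cast hc
  have hcol : ∀ j, ∑ i, τ i j = 1 := by
    intro j
    have hc : ((∑ i, τ i j : ℝ) : ℂ) = ((1:ℝ) : ℂ) := by
      push_cast
      calc (∑ i, ((τ i j : ℝ) : ℂ)) = ∑ i, (R i * R j).trace := by
            exact Finset.sum_congr rfl fun i _ => (hτ i j).symm
      _ = ((∑ i, R i) * R j).trace := by rw [Finset.sum_mul, trace_sum]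
      _ = 1 := by rw [hsum, Matrix.one_mul, htr j]
    exact_mod_cast hc
  have ha := aa_pos hlam
  have hmu := fun j => mu_ge hlam hR hsum ht ht1 j
  have hμpos : ∀ j, 0 < mu hlam hR t j := fun j => lt_of_lt_of_le ha (hmu j)
  have hlog : Real.log (rho hlam hR t) = ∑ j, Real.log (mu hlam hR t j) :=
    Real.log_prod fun j _ => (hμpos j).ne'
  have hper : ∀ j, (mu hlam hR t j - 1) - (mu hlam hR t j - 1) ^ 2 / aa lam
      ≤ Real.log (mu hlam hR t j) := by
    intro j
    set μ := mu hlam hR t j with hμ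
    have h1 : 1 - μ⁻¹ ≤ Real.log μ := by
      have := Real.log_le_sub_one_of_pos (inv_pos.mpr (hμpos j))
      rw [Real.log_inv] at this
      linarith
    have hμne : μ ≠ 0 := (hμpos j).ne'
    have h2 : 1 - μ⁻¹ = (μ - 1) - (μ - 1) ^ 2 / μ := by
      field_simp
      ring
    have h3 : (μ - 1) ^ 2 / μ ≤ (μ - 1) ^ 2 / aa lam := by
      gcongr
      exact hmu j
    linarith
  have hsum1 : ∑ j, (mu hlam hR t j - 1) = ∑ i, (lam i ^ t - 1) := by
    rw [Finset.sum_sub_distrib, Finset.sum_sub_distrib, sum_mu hlam hR htr]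
  have hsum2 : ∑ j, (mu hlam hR t j - 1) ^ 2 ≤ ∑ i, (lam i ^ t - 1) ^ 2 := by
    rw [sum_mu_sub_one_sq hlam hR hsum hτ]
    exact quad_bound hτ0 hrow hcol _
  have hdiv : (∑ j, (mu hlam hR t j - 1) ^ 2) / aa lam ≤ (∑ i, (lam i ^ t - 1) ^ 2) / aa lam := by
    gcongr
  calc (∑ i, (lam i ^ t - 1)) - (∑ i, (lam i ^ t - 1) ^ 2) / aa lam
      ≤ (∑ j, (mu hlam hR t j - 1)) - (∑ j, (mu hlam hR t j - 1) ^ 2) / aa lam := by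
        rw [hsum1]
        linarith
  _ = ∑ j, ((mu hlam hR t j - 1) - (mu hlam hR t j - 1) ^ 2 / aa lam) := by
        rw [Finset.sum_sub_distrib, Finset.sum_sub_distrib, Finset.sum_div, Finset.sum_sub_distrib]
  _ ≤ ∑ j, Real.log (mu hlam hR t j) := Finset.sum_le_sum fun j _ => hper j
  _ = Real.log (rho hlam hR t) := hlog.symm

open Filter Topology in
lemma tendsto_pow_mul_rpow_sub_one (hlam : ∀ i, 0 < lam i) (i : n) :
    Tendsto (fun k : ℕ => (2:ℝ)^k * (lam i ^ ((1/2:ℝ)^k) - 1)) atTop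
      (𝓝 (Real.log (lam i))) := by
  have hfun : (fun t : ℝ => lam i ^ t) = fun t => Real.exp (Real.log (lam i) * t) :=
    funext fun t => Real.rpow_def_of_pos (hlam i) t
  have hd : HasDerivAt (fun t : ℝ => lam i ^ t) (Real.log (lam i)) 0 := by
    rw [hfun]
    have h1 : HasDerivAt (fun x : ℝ => Real.log (lam i) * x) (Real.log (lam i) * 1) 0 :=
      (hasDerivAt_id 0).const_mul (Real.log (lam i))
    have h2 := h1.exp
    simpa using h2
  rw [hasDerivAt_iff_tendsto_slope] at hd
  have hδ0 : Tendsto (fun k : ℕ => (1/2:ℝ)^k) atTop (𝓝 0) :=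
    tendsto_pow_atTop_nhds_zero_of_lt_one (by norm_num) (by norm_num)
  have hδne : Tendsto (fun k : ℕ => (1/2:ℝ)^k) atTop (𝓝[≠] (0:ℝ)) := by
    refine tendsto_nhdsWithin_of_tendsto_nhds_of_eventually_within _ hδ0 ?_
    exact Filter.Eventually.of_forall fun k => (pow_pos (by norm_num : (0:ℝ) < 1/2) k).ne'
  have hcomp := hd.comp hδne
  refine hcomp.congr fun k => ?_
  have hδpos : (0:ℝ) < (1/2:ℝ)^k := pow_pos (by norm_num) k
  have hδinv : ((1/2:ℝ)^k)⁻¹ = (2:ℝ)^k := by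
    rw [one_div, inv_pow, inv_inv]
  show slope (fun t : ℝ => lam i ^ t) 0 ((1/2:ℝ)^k) = _
  rw [slope_def_field]
  rw [Real.rpow_zero, sub_zero, div_eq_mul_inv, hδinv]
  ring

open Filter Topology in
lemma core_log_bound (hlam : ∀ i, 0 < lam i) (hR : ∀ i, (R i).PosSemidef)
    (hsum : ∑ i, R i = 1) (htr : ∀ i, (R i).trace = 1) :
    ∑ i, Real.log (lam i) ≤ Real.log (rho hlam hR 1) := by
  set L := ∑ i, Real.log (lam i) with hL
  set δ : ℕ → ℝ := fun k => (1/2:ℝ)^k with hδ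
  have hδpos : ∀ k, (0:ℝ) < δ k := fun k => pow_pos (by norm_num) k
  have hδ1 : ∀ k, δ k ≤ 1 := fun k => pow_le_one₀ (by norm_num) (by norm_num)
  set e : ℕ → ℝ := fun k =>
    (∑ i, (2:ℝ)^k * (lam i ^ δ k - 1)) - (∑ i, (2:ℝ)^k * (lam i ^ δ k - 1)^2) / aa lam with he
  have hek : ∀ k, e k ≤ Real.log (rho hlam hR 1) := by
    intro k
    have hρδ : 0 < rho hlam hR (δ k) := rho_pos hlam hR hsum (hδpos k).le (hδ1 k)
    have h2 : (2:ℝ)^k * Real.log (rho hlam hR (δ k)) ≤ Real.log (rho hlam hR 1) := by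
      have := Real.log_le_log (pow_pos hρδ _) (rho_iter hlam hR hsum k)
      rwa [Real.log_pow, Nat.cast_pow, Nat.cast_ofNat] at this
    have h3 := log_rho_lower hlam hR hsum htr (hδpos k) (hδ1 k)
    have h4 : e k ≤ (2:ℝ)^k * Real.log (rho hlam hR (δ k)) := by
      have h5 : e k = (2:ℝ)^k *
          ((∑ i, (lam i ^ δ k - 1)) - (∑ i, (lam i ^ δ k - 1)^2) / aa lam) := by
        show (∑ i, (2:ℝ)^k * (lam i ^ δ k - 1))
            - (∑ i, (2:ℝ)^k * (lam i ^ δ k - 1)^2) / aa lam = _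
        rw [← Finset.mul_sum, ← Finset.mul_sum]
        ring
      rw [h5]
      exact mul_le_mul_of_nonneg_left h3 (pow_pos (by norm_num : (0:ℝ) < 2) k).le
    linarith
  have htend : Tendsto e atTop (𝓝 L) := by
    have hT1 : Tendsto (fun k => ∑ i, (2:ℝ)^k * (lam i ^ δ k - 1)) atTop (𝓝 L) := by
      rw [hL]
      exact tendsto_finset_sum _ fun i _ => tendsto_pow_mul_rpow_sub_one hlam i
    have hT2 : Tendsto (fun k => ∑ i, (2:ℝ)^k * (lam i ^ δ k - 1)^2) atTop (𝓝 0) := by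
      have : Tendsto (fun k => ∑ i, (2:ℝ)^k * (lam i ^ δ k - 1)^2) atTop
          (𝓝 (∑ i : n, (0:ℝ))) := by
        refine tendsto_finset_sum _ fun i _ => ?_
        have h1 := tendsto_pow_mul_rpow_sub_one hlam i
        have hδ0 : Tendsto δ atTop (𝓝 0) :=
          tendsto_pow_atTop_nhds_zero_of_lt_one (by norm_num) (by norm_num)
        have hx : Tendsto (fun k => lam i ^ δ k - 1) atTop (𝓝 0) := by
          have hexp : Tendsto (fun k => Real.exp (Real.log (lam i) * δ k)) atTop
              (𝓝 (Real.exp (Real.log (lam i) * 0))) :=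
            (Real.continuous_exp.tendsto _).comp (hδ0.const_mul _)
          have hexp1 : Tendsto (fun k => lam i ^ δ k) atTop (𝓝 1) := by
            rw [mul_zero, Real.exp_zero] at hexp
            refine hexp.congr fun k => ?_
            exact (Real.rpow_def_of_pos (hlam i) (δ k)).symm
          have := hexp1.sub (tendsto_const_nhds (x := (1:ℝ)))
          rwa [sub_self] at this
        have := h1.mul hx
        rw [mul_zero] at this
        refine this.congr fun k => ?_
        ring
      simpa using this
    have := hT1.sub (hT2.div_const (aa lam))
    rw [zero_div, sub_zero] at this
    exact this
  exact le_of_tendsto htend (Filter.Eventually.of_forall hek)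

/-- The core determinant lower bound. -/
lemma core_det_ge (hlam : ∀ i, 0 < lam i) (hR : ∀ i, (R i).PosSemidef)
    (hsum : ∑ i, R i = 1) (htr : ∀ i, (R i).trace = 1) :
    ((∏ i, lam i : ℝ) : ℂ) ≤ (∑ i, ((lam i : ℝ) : ℂ) • R i).det := by
  have hρ1 : 0 < rho hlam hR 1 := rho_pos hlam hR hsum zero_le_one le_rfl
  have h : ∏ i, lam i ≤ rho hlam hR 1 := by
    calc ∏ i, lam i = ∏ i, Real.exp (Real.log (lam i)) :=
          Finset.prod_congr rfl fun i _ => (Real.exp_log (hlam i)).symm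
    _ = Real.exp (∑ i, Real.log (lam i)) := (Real.exp_sum _ _).symm
    _ ≤ Real.exp (Real.log (rho hlam hR 1)) :=
          Real.exp_le_exp.mpr (core_log_bound hlam hR hsum htr)
    _ = rho hlam hR 1 := Real.exp_log hρ1
  have hM1 : Mt lam R 1 = ∑ i, ((lam i : ℝ) : ℂ) • R i := by
    rw [Mt]
    exact Finset.sum_congr rfl fun i _ => by rw [Real.rpow_one]
  rw [← hM1, det_Mt hlam hR]
  exact_mod_cast h

end Core

set_option maxHeartbeats 1000000 in
/-- **Key lemma**: for `G` posdef and doubly-stochastic-type `X, Y`,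
`det G ≤ det (XᴴGX + YᴴGY)`. -/
lemma key_det_ge [Nonempty n] {G X Y : Matrix n n ℂ} (hG : G.PosDef)
    (h1 : Xᴴ * X + Yᴴ * Y = 1) (h2 : X * Xᴴ + Y * Yᴴ = 1) :
    G.det ≤ (Xᴴ * G * X + Yᴴ * G * Y).det := by
  classical
  have hH : G.IsHermitian := hG.1
  obtain ⟨hsu, hus⟩ := star_mul_self_unitary hH
  set V : Matrix n n ℂ := (hH.eigenvectorUnitary : Matrix n n ℂ) with hV
  set lam : n → ℝ := hH.eigenvalues with hlamdef
  set d : n → (n → ℂ) := fun i j => if j = i then 1 else 0 with hd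
  set E : n → Matrix n n ℂ := fun i => V * diagonal (d i) * Vᴴ with hE
  have hdsum : ∑ i, diagonal (d i) = (1 : Matrix n n ℂ) := by
    ext j j'
    rw [Matrix.sum_apply]
    by_cases h : j = j'
    · subst h
      simp [hd, diagonal_apply, Matrix.one_apply]
    · simp [hd, diagonal_apply, Matrix.one_apply, h]
  have hdiag : diagonal (RCLike.ofReal ∘ lam) = ∑ i, ((lam i : ℝ) : ℂ) • diagonal (d i) := by
    ext j j'
    rw [Matrix.sum_apply]
    by_cases h : j = j'
    · subst h
      simp [hd, diagonal_apply, Function.comp_apply, Finset.sum_ite_eq', mul_comm]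
    · simp [hd, diagonal_apply, h]
  have hEpsd : ∀ i, (E i).PosSemidef := by
    intro i
    refine PosSemidef.mul_mul_conjTranspose_same (PosSemidef.diagonal ?_) V
    intro j
    by_cases h : j = i <;> simp [hd, h]
  have hEsum : ∑ i, E i = 1 := by
    rw [hE]
    have : ∑ i, V * diagonal (d i) * Vᴴ = V * (∑ i, diagonal (d i)) * Vᴴ := by
      rw [Finset.mul_sum, Finset.sum_mul]
    rw [this, hdsum, Matrix.mul_one, hus]
  have htrE : ∀ i, (E i).trace = 1 := by
    intro i
    rw [hE]
    show (V * diagonal (d i) * Vᴴ).trace = 1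
    rw [trace_mul_cycle, hsu, Matrix.one_mul, trace_diagonal]
    simp [hd]
  have hGdec : G = ∑ i, ((lam i : ℝ) : ℂ) • E i := by
    have hspec : G = V * diagonal (RCLike.ofReal ∘ lam) * Vᴴ := by
      have := hH.spectral_theorem
      rwa [Unitary.conjStarAlgAut_apply, Matrix.star_eq_conjTranspose] at this
    rw [hspec, hdiag, Finset.mul_sum, Finset.sum_mul]
    exact Finset.sum_congr rfl fun i _ => by
      rw [Matrix.mul_smul, Matrix.smul_mul]
  set R : n → Matrix n n ℂ := fun i => Xᴴ * E i * X + Yᴴ * E i * Y with hRdef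
  have hRpsd : ∀ i, (R i).PosSemidef := fun i =>
    ((hEpsd i).conjTranspose_mul_mul_same X).add ((hEpsd i).conjTranspose_mul_mul_same Y)
  have hsplit1 : ∀ (c : n → ℂ) (W : Matrix n n ℂ),
      Wᴴ * (∑ i, c i • E i) * W = ∑ i, c i • (Wᴴ * E i * W) := by
    intro c W
    rw [Finset.mul_sum, Finset.sum_mul]
    exact Finset.sum_congr rfl fun i _ => by
      rw [Matrix.mul_smul, Matrix.smul_mul]
  have hmulsum : ∀ W : Matrix n n ℂ, ∑ i, Wᴴ * E i * W = Wᴴ * (∑ i, E i) * W := by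
    intro W
    rw [Finset.mul_sum, Finset.sum_mul]
  have hRsum : ∑ i, R i = 1 := by
    calc ∑ i, R i = (∑ i, Xᴴ * E i * X) + ∑ i, Yᴴ * E i * Y := by
          rw [← Finset.sum_add_distrib]
    _ = Xᴴ * (∑ i, E i) * X + Yᴴ * (∑ i, E i) * Y := by rw [hmulsum, hmulsum]
    _ = 1 := by rw [hEsum, Matrix.mul_one, Matrix.mul_one, h1]
  have htrR : ∀ i, (R i).trace = 1 := by
    intro i
    show (Xᴴ * E i * X + Yᴴ * E i * Y).trace = 1
    rw [trace_add, trace_mul_cycle (A := Xᴴ), trace_mul_cycle (A := Yᴴ)]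
    rw [← trace_add, ← Matrix.add_mul, h2, Matrix.one_mul]
    exact htrE i
  have hZ : Xᴴ * G * X + Yᴴ * G * Y = ∑ i, ((lam i : ℝ) : ℂ) • R i := by
    conv_lhs => rw [hGdec]
    rw [hsplit1, hsplit1, ← Finset.sum_add_distrib]
    exact Finset.sum_congr rfl fun i _ => by rw [← smul_add]
  have hdetG : G.det = ((∏ i, lam i : ℝ) : ℂ) := by
    rw [hH.det_eq_prod_eigenvalues]
    push_cast
    rfl
  rw [hdetG, hZ]
  exact core_det_ge hG.eigenvalues_pos hRpsd hRsum htrR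

set_option maxHeartbeats 1000000 in
/-- Main inequality in the positive definite case. -/
lemma main_posdef [Nonempty n] {A B X Y : Matrix n n ℂ} (hA : A.PosDef) (hB : B.PosDef)
    (h1 : Xᴴ * X + Yᴴ * Y = 1) (h2 : X * Xᴴ + Y * Yᴴ = 1) :
    A.det * B.det ≤ (Xᴴ * A * X + Yᴴ * B * Y).det * (Yᴴ * A * Y + Xᴴ * B * X).det := by
  classical
  -- square root of A
  set S : Matrix n n ℂ := hA.posSemidef.sqrt with hSdef
  have hSpsd : S.PosSemidef := hA.posSemidef.posSemidef_sqrt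
  have hSH : Sᴴ = S := hSpsd.1.eq
  have hSS : S * S = A := hA.posSemidef.sqrt_mul_self
  have hdetSS : S.det * S.det = A.det := by rw [← det_mul, hSS]
  have hSd : S.det ≠ 0 := fun h => hA.det_pos.ne' (by rw [← hdetSS, h, mul_zero])
  have hSu : IsUnit S.det := isUnit_iff_ne_zero.mpr hSd
  have hSinv : S * S⁻¹ = 1 := mul_nonsing_inv S hSu
  have hSinv' : S⁻¹ * S = 1 := nonsing_inv_mul S hSu
  have hSinvH : (S⁻¹)ᴴ = S⁻¹ := by rw [conjTranspose_nonsing_inv, hSH]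
  have hSinvd : (S⁻¹).det ≠ 0 := by
    rw [det_nonsing_inv, Ring.inverse_eq_inv']
    exact inv_ne_zero hSd
  -- B' = S⁻¹ B S⁻¹ and its square root C
  set B' : Matrix n n ℂ := S⁻¹ * B * S⁻¹ with hB'def
  have hB'pd : B'.PosDef := by
    have := posDef_conj hB hSinvd
    rwa [hSinvH] at this
  set C : Matrix n n ℂ := hB'pd.posSemidef.sqrt with hCdef
  have hCpsd : C.PosSemidef := hB'pd.posSemidef.posSemidef_sqrt
  have hCH : Cᴴ = C := hCpsd.1.eq
  have hCC : C * C = B' := hB'pd.posSemidef.sqrt_mul_self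
  have hCd : C.det ≠ 0 := fun h => hB'pd.det_pos.ne' (by rw [← hCC, det_mul, h, mul_zero])
  have hCpd : C.PosDef := posDef_of_posSemidef_det_ne_zero hCpsd hCd
  -- geometric mean G = S C S
  set G : Matrix n n ℂ := S * C * S with hGdef
  have hGpd : G.PosDef := by
    have := posDef_conj hCpd hSd
    rwa [hSH] at this
  -- S C C S = B
  have hSCCS : S * C * (C * S) = B := by
    have h1' : S * C * (C * S) = S * (C * C) * S := by
      simp only [Matrix.mul_assoc]
    rw [h1', hCC, hB'def]
    calc S * (S⁻¹ * B * S⁻¹) * S = (S * S⁻¹) * B * (S⁻¹ * S) := by simp only [Matrix.mul_assoc]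
    _ = B := by rw [hSinv, hSinv', Matrix.one_mul, Matrix.mul_one]
  -- determinant of G
  have hdetG2 : G.det * G.det = A.det * B.det := by
    have hdetB' : C.det * C.det = (S.det)⁻¹ * B.det * (S.det)⁻¹ := by
      rw [← det_mul, hCC, hB'def, det_mul, det_mul, det_nonsing_inv, Ring.inverse_eq_inv']
    rw [hGdef, det_mul, det_mul]
    have expand : S.det * C.det * S.det * (S.det * C.det * S.det)
        = (S.det * S.det) * (S.det * S.det) * (C.det * C.det) := by ring
    rw [expand, hdetB', ← hdetSS]
    field_simp
  -- the big block matrix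
  set Z : Matrix n n ℂ := Xᴴ * G * X + Yᴴ * G * Y with hZdef
  set P : Matrix n n ℂ := Xᴴ * A * X + Yᴴ * B * Y with hPdef
  set Q : Matrix n n ℂ := Yᴴ * A * Y + Xᴴ * B * X with hQdef
  have hZH : Zᴴ = Z := by
    rw [hZdef, conjTranspose_add]
    simp only [conjTranspose_mul, conjTranspose_conjTranspose]
    rw [show Gᴴ = G from hGpd.1.eq]
    simp only [Matrix.mul_assoc]
  have g11 : (S * X)ᴴ * (S * X) + (C * S * Y)ᴴ * (C * S * Y) = P := by
    rw [hPdef, ← hSS, ← hSCCS]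
    simp only [conjTranspose_mul, hSH, hCH, Matrix.mul_assoc]
  have g12 : (S * X)ᴴ * (C * S * X) + (C * S * Y)ᴴ * (S * Y) = Z := by
    rw [hZdef, hGdef]
    simp only [conjTranspose_mul, hSH, hCH, Matrix.mul_assoc]
  have g21 : (C * S * X)ᴴ * (S * X) + (S * Y)ᴴ * (C * S * Y) = Zᴴ := by
    rw [hZH, hZdef, hGdef]
    simp only [conjTranspose_mul, hSH, hCH, Matrix.mul_assoc]
  have g22 : (C * S * X)ᴴ * (C * S * X) + (S * Y)ᴴ * (S * Y) = Q := by
    rw [hQdef, add_comm (Yᴴ * A * Y), ← hSS, ← hSCCS]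
    simp only [conjTranspose_mul, hSH, hCH, Matrix.mul_assoc]
  set U₁ : Matrix (n ⊕ n) (n ⊕ n) ℂ := fromBlocks (S * X) (C * S * X) 0 0 with hU₁
  set U₂ : Matrix (n ⊕ n) (n ⊕ n) ℂ := fromBlocks (C * S * Y) (S * Y) 0 0 with hU₂
  have hblock : fromBlocks P Z Zᴴ Q = U₁ᴴ * U₁ + U₂ᴴ * U₂ := by
    rw [hU₁, hU₂, fromBlocks_conjTranspose, fromBlocks_conjTranspose,
      fromBlocks_multiply, fromBlocks_multiply, fromBlocks_add]
    simp only [Matrix.conjTranspose_zero, Matrix.zero_mul, Matrix.mul_zero, add_zero, zero_add]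
    rw [g11, g12, g21, g22]
  have hblkpsd : (fromBlocks P Z Zᴴ Q).PosSemidef := by
    rw [hblock]
    exact (posSemidef_conjTranspose_mul_self U₁).add (posSemidef_conjTranspose_mul_self U₂)
  have hP : P.PosDef := posDef_conj_add hA hB h1
  have hQ : Q.PosDef := by
    refine posDef_conj_add hA hB ?_
    rw [add_comm]
    exact h1
  have hZpd : Z.PosDef := posDef_conj_add hGpd hGpd h1
  have hCS : Z.det * Z.det ≤ P.det * Q.det :=
    det_sq_le_of_fromBlocks_posSemidef hP hZpd hQ.posSemidef hblkpsd
  have hkey : G.det ≤ Z.det := key_det_ge hGpd h1 h2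
  calc A.det * B.det = G.det * G.det := hdetG2.symm
  _ ≤ Z.det * Z.det := mul_le_mul hkey hkey (psd_det_nonneg hGpd.posSemidef)
      (psd_det_nonneg hZpd.posSemidef)
  _ ≤ P.det * Q.det := hCS

end BourinLee

open BourinLee in
/-- **Determinantal inequality (Bourin–Lee).** For positive semidefinite
`A, B` and `X, Y` with `X*X + Y*Y = XX* + YY* = I`,
`det(X*AX + Y*BY) · det(Y*AY + X*BX) ≥ det A · det B`. -/
theorem det_block_superadditive {n : ℕ}
    {A B X Y : Matrix (Fin n) (Fin n) ℂ}
    (hA : A.PosSemidef) (hB : B.PosSemidef)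
    (h1 : Xᴴ * X + Yᴴ * Y = 1) (h2 : X * Xᴴ + Y * Yᴴ = 1) :
    A.det * B.det ≤ (Xᴴ * A * X + Yᴴ * B * Y).det * (Yᴴ * A * Y + Xᴴ * B * X).det := by
  classical
  rcases Nat.eq_zero_or_pos n with h0 | hpos
  · subst h0
    simp [Matrix.det_isEmpty]
  · haveI : Nonempty (Fin n) := Fin.pos_iff_nonempty.mp hpos
    have hPpsd : (Xᴴ * A * X + Yᴴ * B * Y).PosSemidef :=
      (hA.conjTranspose_mul_mul_same X).add (hB.conjTranspose_mul_mul_same Y)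
    have hQpsd : (Yᴴ * A * Y + Xᴴ * B * X).PosSemidef :=
      (hA.conjTranspose_mul_mul_same Y).add (hB.conjTranspose_mul_mul_same X)
    have hrhs : 0 ≤ (Xᴴ * A * X + Yᴴ * B * Y).det * (Yᴴ * A * Y + Xᴴ * B * X).det :=
      mul_nonneg (psd_det_nonneg hPpsd) (psd_det_nonneg hQpsd)
    by_cases hAd : A.det = 0
    · rw [hAd, zero_mul]
      exact hrhs
    by_cases hBd : B.det = 0
    · rw [hBd, mul_zero]
      exact hrhs
    exact main_posdef (posDef_of_posSemidef_det_ne_zero hA hAd)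
      (posDef_of_posSemidef_det_ne_zero hB hBd) h1 h2
end

section
/- Let bA ∈ M_{d,d'}(ℂ) be written in block-column form bA = [C_1 C_2 … C_p], where C_i has m_i columns. Then |bA|² = Σ_{i=1}^p U_i |C_i|² U_i* for some isometries U_i ∈ M_{d', m_i}(ℂ) (i.e. U_i* U_i = I_{m_i}). Consequently, for Schatten q-norms with q ≥ 2, ‖bA‖_q² ≤ Σ_i ‖C_i‖_q². -/
open Matrix ComplexOrder

/-- Eigenvalues of a Hermitian matrix (junk value `0` otherwise). -/
noncomputable def herEigs {ι : Type*} [Fintype ι] [DecidableEq ι]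
    (M : Matrix ι ι ℂ) : ι → ℝ :=
  if h : M.IsHermitian then h.eigenvalues else 0

/-- The Schatten `q`-norm `‖X‖_q = (Tr |X|^q)^{1/q} = (Σ λᵢ(XᴴX)^{q/2})^{1/q}`. -/
noncomputable def schattenNorm {α β : Type*} [Fintype α] [Fintype β] [DecidableEq β]
    (q : ℝ) (X : Matrix α β ℂ) : ℝ :=
  (∑ j, herEigs (Xᴴ * X) j ^ (q / 2)) ^ (1 / q)

/-- The `i`-th column block of a matrix whose columns are partitioned into
blocks indexed by `Σ i, Fin (m i)`. -/
def colBlock {d p : ℕ} {m : Fin p → ℕ}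
    (bA : Matrix (Fin d) ((i : Fin p) × Fin (m i)) ℂ) (i : Fin p) :
    Matrix (Fin d) (Fin (m i)) ℂ :=
  Matrix.of fun r c => bA r ⟨i, c⟩

lemma key_scalar {ι κ : Type*} [Fintype ι] [Fintype κ] {r : ℝ} (hr : 1 ≤ r)
    (t : ι → κ → ℝ) (ht : ∀ j k, 0 ≤ t j k)
    (hrow : ∀ j, ∑ k, t j k ≤ 1) (hcol : ∀ k, ∑ j, t j k ≤ 1)
    (μ : ι → ℝ) (hμ : ∀ j, 0 ≤ μ j) (ν : κ → ℝ) (hν : ∀ k, 0 ≤ ν k) :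
    ∑ j, ∑ k, μ j ^ (r - 1) * ν k * t j k ≤
      (∑ k, ν k ^ r) ^ (1/r) * (∑ j, μ j ^ r) ^ (1 - 1/r) := by
  have hνr : (0:ℝ) ≤ ∑ k, ν k ^ r := Finset.sum_nonneg fun k _ => Real.rpow_nonneg (hν k) r
  have hμr : (0:ℝ) ≤ ∑ j, μ j ^ r := Finset.sum_nonneg fun j _ => Real.rpow_nonneg (hμ j) r
  rcases eq_or_lt_of_le hr with heq | hlt
  · -- r = 1
    rw [← heq]
    simp only [sub_self, Real.rpow_zero, one_mul, Real.rpow_one, div_one, mul_one]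
    calc ∑ j, ∑ k, ν k * t j k = ∑ k, ν k * ∑ j, t j k := by
          rw [Finset.sum_comm]; simp [Finset.mul_sum]
      _ ≤ ∑ k, ν k * 1 := by
          refine Finset.sum_le_sum fun k _ => mul_le_mul_of_nonneg_left (hcol k) (hν k)
      _ = ∑ k, ν k := by simp
  · -- r > 1
    have hr0 : (0:ℝ) < r := by linarith
    have hr1 : (0:ℝ) < r - 1 := by linarith
    set p : ℝ := r / (r - 1) with hp
    have hpq : p.HolderConjugate r := by
      rw [Real.holderConjugate_iff]; constructor
      · rw [hp, lt_div_iff₀ hr1]; linarith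
      · rw [hp]; field_simp; ring
    have hp0 : (0:ℝ) < p := hpq.pos
    have ha : (1 - 1/r) * p = 1 := by rw [hp]; field_simp
    have hb : (r - 1) * p = r := by rw [hp]; field_simp
    have key := Real.inner_le_Lp_mul_Lq_of_nonneg (s := Finset.univ)
      (f := fun s : ι × κ => t s.1 s.2 ^ (1 - 1/r) * μ s.1 ^ (r - 1))
      (g := fun s : ι × κ => t s.1 s.2 ^ (1/r) * ν s.2) hpq
      (fun s _ => mul_nonneg (Real.rpow_nonneg (ht _ _) _) (Real.rpow_nonneg (hμ _) _))
      (fun s _ => mul_nonneg (Real.rpow_nonneg (ht _ _) _) (hν _))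
    have e1 : ∀ s : ι × κ, (t s.1 s.2 ^ (1 - 1/r) * μ s.1 ^ (r - 1)) *
        (t s.1 s.2 ^ (1/r) * ν s.2) = μ s.1 ^ (r-1) * ν s.2 * t s.1 s.2 := by
      intro s
      have h2 : t s.1 s.2 ^ (1 - 1/r) * t s.1 s.2 ^ (1/r) = t s.1 s.2 := by
        rw [← Real.rpow_add' (ht s.1 s.2) (by norm_num)]
        simp
      calc (t s.1 s.2 ^ (1 - 1/r) * μ s.1 ^ (r - 1)) * (t s.1 s.2 ^ (1/r) * ν s.2)
          = (t s.1 s.2 ^ (1 - 1/r) * t s.1 s.2 ^ (1/r)) * (μ s.1 ^ (r-1) * ν s.2) := by ring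
        _ = μ s.1 ^ (r-1) * ν s.2 * t s.1 s.2 := by rw [h2]; ring
    have e2 : ∀ s : ι × κ, (t s.1 s.2 ^ (1 - 1/r) * μ s.1 ^ (r - 1)) ^ p
        = t s.1 s.2 * μ s.1 ^ r := by
      intro s
      rw [Real.mul_rpow (Real.rpow_nonneg (ht _ _) _) (Real.rpow_nonneg (hμ _) _),
        ← Real.rpow_mul (ht _ _), ← Real.rpow_mul (hμ _), ha, hb, Real.rpow_one]
    have e3 : ∀ s : ι × κ, (t s.1 s.2 ^ (1/r) * ν s.2) ^ r = t s.1 s.2 * ν s.2 ^ r := by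
      intro s
      rw [Real.mul_rpow (Real.rpow_nonneg (ht _ _) _) (hν _),
        ← Real.rpow_mul (ht _ _), one_div, inv_mul_cancel₀ (ne_of_gt hr0), Real.rpow_one]
    simp only [e1, e2, e3] at key
    -- sums over pairs
    have lhs_eq : ∑ s : ι × κ, μ s.1 ^ (r-1) * ν s.2 * t s.1 s.2
        = ∑ j, ∑ k, μ j ^ (r - 1) * ν k * t j k := Fintype.sum_prod_type _
    have b1 : ∑ s : ι × κ, t s.1 s.2 * μ s.1 ^ r ≤ ∑ j, μ j ^ r := by
      rw [Fintype.sum_prod_type]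
      calc ∑ j, ∑ k, t j k * μ j ^ r = ∑ j, μ j ^ r * ∑ k, t j k := by
            simp [Finset.mul_sum]; exact Finset.sum_congr rfl fun j _ => by
              exact Finset.sum_congr rfl fun k _ => by ring
        _ ≤ ∑ j, μ j ^ r * 1 := Finset.sum_le_sum fun j _ =>
            mul_le_mul_of_nonneg_left (hrow j) (Real.rpow_nonneg (hμ j) r)
        _ = ∑ j, μ j ^ r := by simp
    have b2 : ∑ s : ι × κ, t s.1 s.2 * ν s.2 ^ r ≤ ∑ k, ν k ^ r := by
      rw [Fintype.sum_prod_type_right]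
      calc ∑ k, ∑ j, t j k * ν k ^ r = ∑ k, ν k ^ r * ∑ j, t j k := by
            refine Finset.sum_congr rfl fun k _ => ?_
            rw [Finset.mul_sum]
            exact Finset.sum_congr rfl fun j _ => by ring
        _ ≤ ∑ k, ν k ^ r * 1 := Finset.sum_le_sum fun k _ =>
            mul_le_mul_of_nonneg_left (hcol k) (Real.rpow_nonneg (hν k) r)
        _ = ∑ k, ν k ^ r := by simp
    have hsum1 : (0:ℝ) ≤ ∑ s : ι × κ, t s.1 s.2 * μ s.1 ^ r :=
      Finset.sum_nonneg fun s _ => mul_nonneg (ht _ _) (Real.rpow_nonneg (hμ _) _)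
    have hsum2 : (0:ℝ) ≤ ∑ s : ι × κ, t s.1 s.2 * ν s.2 ^ r :=
      Finset.sum_nonneg fun s _ => mul_nonneg (ht _ _) (Real.rpow_nonneg (hν _) _)
    have c1 : (∑ s : ι × κ, t s.1 s.2 * μ s.1 ^ r) ^ (1/p) ≤ (∑ j, μ j ^ r) ^ (1 - 1/r) := by
      have : (1:ℝ)/p = 1 - 1/r := by
        rw [hp]; field_simp
      rw [this]
      have h1r : 1/r ≤ 1 := by rw [div_le_one hr0]; linarith
      exact Real.rpow_le_rpow hsum1 b1 (by linarith)
    have c2 : (∑ s : ι × κ, t s.1 s.2 * ν s.2 ^ r) ^ (1/r) ≤ (∑ k, ν k ^ r) ^ (1/r) :=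
      Real.rpow_le_rpow hsum2 b2 (by positivity)
    calc ∑ j, ∑ k, μ j ^ (r - 1) * ν k * t j k
        = ∑ s : ι × κ, μ s.1 ^ (r-1) * ν s.2 * t s.1 s.2 := lhs_eq.symm
      _ ≤ (∑ s : ι × κ, t s.1 s.2 * μ s.1 ^ r) ^ (1/p) *
          (∑ s : ι × κ, t s.1 s.2 * ν s.2 ^ r) ^ (1/r) := key
      _ ≤ (∑ j, μ j ^ r) ^ (1 - 1/r) * (∑ k, ν k ^ r) ^ (1/r) := by
          exact mul_le_mul c1 c2 (Real.rpow_nonneg hsum2 _) (Real.rpow_nonneg hμr _)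
      _ = (∑ k, ν k ^ r) ^ (1/r) * (∑ j, μ j ^ r) ^ (1 - 1/r) := mul_comm _ _

lemma colsum_normSq {ι κ : Type*} [Fintype ι] [Fintype κ] [DecidableEq κ] {Z : Matrix ι κ ℂ} (hZ : Zᴴ * Z = 1) (k : κ) :
    ∑ j, Complex.normSq (Z j k) = 1 := by
  have h := congrFun (congrFun hZ k) k
  simp only [Matrix.mul_apply, Matrix.conjTranspose_apply, Matrix.one_apply_eq] at h
  have h2 : ((∑ j, Complex.normSq (Z j k) : ℝ) : ℂ) = 1 := by
    push_cast
    rw [← h]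
    exact Finset.sum_congr rfl fun j _ => by
      rw [Complex.normSq_eq_conj_mul_self]; rfl
  exact_mod_cast h2

lemma rowsum_normSq {ι κ : Type*} [Fintype ι] [Fintype κ] [DecidableEq κ] {Z : Matrix ι κ ℂ} (hZ : Zᴴ * Z = 1) (j : ι) :
    ∑ k, Complex.normSq (Z j k) ≤ 1 := by
  set P := Z * Zᴴ with hP
  have hidem : P * P = P := by
    rw [hP, Matrix.mul_assoc, ← Matrix.mul_assoc Zᴴ Z Zᴴ, hZ, Matrix.one_mul]
  have hdiag : ∀ a, P a a = ((∑ k, Complex.normSq (Z a k) : ℝ) : ℂ) := by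
    intro a
    push_cast
    simp only [hP, Matrix.mul_apply, Matrix.conjTranspose_apply]
    exact Finset.sum_congr rfl fun k _ => by
      rw [Complex.normSq_eq_conj_mul_self]; ring_nf; rfl
  have hsym : ∀ a b, P b a = (starRingEnd ℂ) (P a b) := by
    intro a b
    simp only [hP, Matrix.mul_apply, Matrix.conjTranspose_apply, map_sum,
      RingHom.map_mul, Complex.conj_conj, RCLike.star_def]
    exact Finset.sum_congr rfl fun k _ => mul_comm _ _
  set x : ℝ := ∑ k, Complex.normSq (Z j k) with hx
  have hx0 : 0 ≤ x := Finset.sum_nonneg fun k _ => Complex.normSq_nonneg _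
  -- (P*P) j j = ∑ s normSq (P j s) ≥ normSq (P j j) = x^2 ; and (P*P) j j = P j j = x
  have key : ((x:ℂ)) = ∑ s, (Complex.normSq (P j s) : ℂ) := by
    calc (x:ℂ) = P j j := (hdiag j).symm
      _ = (P * P) j j := by rw [hidem]
      _ = ∑ s, P j s * P s j := Matrix.mul_apply
      _ = ∑ s, (Complex.normSq (P j s) : ℂ) := by
          refine Finset.sum_congr rfl fun s _ => ?_
          rw [hsym j s, Complex.mul_conj]
  have key' : x = ∑ s, Complex.normSq (P j s) := by exact_mod_cast key
  have hge : x ^ 2 ≤ x := by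
    have : Complex.normSq (P j j) ≤ ∑ s, Complex.normSq (P j s) :=
      Finset.single_le_sum (f := fun s => Complex.normSq (P j s))
        (fun s _ => Complex.normSq_nonneg _) (Finset.mem_univ j)
    have hjj : Complex.normSq (P j j) = x ^ 2 := by
      rw [hdiag j, ← hx, Complex.normSq_ofReal, sq]
    rw [← key'] at this
    rw [← hjj]
    exact this
  nlinarith

lemma trace_diag {ι κ : Type*} [Fintype ι] [Fintype κ] [DecidableEq ι] [DecidableEq κ]
    (a : κ → ℝ) (c : ι → ℝ) (B : Matrix ι κ ℂ) :
    Matrix.trace (diagonal (fun k => (a k : ℂ)) * Bᴴ * diagonal (fun j => (c j : ℂ)) * B)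
      = ((∑ j, ∑ k, c j * a k * Complex.normSq (B j k) : ℝ) : ℂ) := by
  push_cast
  rw [Finset.sum_comm]
  simp only [Matrix.trace, Matrix.diag_apply, Matrix.mul_apply, Matrix.diagonal_apply,
    Matrix.conjTranspose_apply, Finset.sum_mul, Finset.mul_sum, ite_mul, zero_mul,
    Finset.sum_ite_eq, Finset.mem_univ, if_true]
  refine Finset.sum_congr rfl fun k _ => ?_
  refine Finset.sum_congr rfl fun j _ => ?_
  simp only [mul_ite, mul_zero, ite_mul, zero_mul, Finset.sum_ite_eq, Finset.sum_ite_eq',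
    Finset.mem_univ, if_true]
  rw [Complex.normSq_eq_conj_mul_self, RCLike.star_def]
  ring

lemma ext_isometry {ι κ : Type*} [Fintype ι] [Fintype κ] [DecidableEq ι] [DecidableEq κ]
    (hcard : Fintype.card κ ≤ Fintype.card ι)
    (Y : Matrix ι κ ℂ) (l : κ → ℝ) (hl : ∀ j, 0 ≤ l j)
    (hGram : Yᴴ * Y = diagonal (fun j => (l j : ℂ))) :
    ∃ W : Matrix ι κ ℂ, Wᴴ * W = 1 ∧
      Y * Yᴴ = W * diagonal (fun j => (l j : ℂ)) * Wᴴ := by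
  classical
  obtain ⟨ψ⟩ : Nonempty (κ ↪ ι) := Function.Embedding.nonempty_of_card_le hcard
  set E := EuclideanSpace ℂ ι
  set g : κ → E := fun j => (WithLp.equiv 2 (ι → ℂ)).symm (fun i => Y i j) with hg
  have hinner_g : ∀ a b : κ, (inner ℂ (g a) (g b) : ℂ) = (Yᴴ * Y) a b := by
    intro a b
    rw [EuclideanSpace.inner_eq_star_dotProduct]
    simp [dotProduct, Matrix.mul_apply, Matrix.conjTranspose_apply, g]
    exact Finset.sum_congr rfl fun i _ => mul_comm _ _
  set f : κ → E := fun j => (((Real.sqrt (l j))⁻¹ : ℝ) : ℂ) • g j with hf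
  set s : Set κ := {j | l j ≠ 0} with hs
  set v : ι → E := Function.extend ψ f 0 with hv
  have hvψ : ∀ j : κ, v (ψ j) = f j := fun j => ψ.injective.extend_apply f 0 j
  have horth : Orthonormal ℂ ((ψ '' s).restrict v) := by
    rw [orthonormal_iff_ite]
    rintro ⟨i1, hi1⟩ ⟨i2, hi2⟩
    obtain ⟨a, ha, rfl⟩ := id hi1
    obtain ⟨b, hb, rfl⟩ := id hi2
    show inner ℂ (v (ψ a)) (v (ψ b)) = _
    rw [hvψ, hvψ]
    rw [hf]
    simp only [inner_smul_left, inner_smul_right, Complex.conj_ofReal]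
    rw [hinner_g, hGram]
    by_cases hab : a = b
    · subst hab
      have hla : l a ≠ 0 := ha
      have : ((⟨ψ a, _⟩ : ↥(ψ '' s)) = ⟨ψ a, ⟨a, ha, rfl⟩⟩) := rfl
      rw [if_pos rfl]
      simp only [Matrix.diagonal_apply_eq]
      have hpos : 0 < l a := lt_of_le_of_ne (hl a) (Ne.symm hla)
      have hsq : Real.sqrt (l a) ≠ 0 := by positivity
      norm_cast
      field_simp
      rw [Real.sq_sqrt (hl a)]
    · rw [Matrix.diagonal_apply_ne _ hab, if_neg]
      · ring
      · intro hc
        exact hab (ψ.injective (congrArg Subtype.val hc))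
  have card_ι : Module.finrank ℂ E = Fintype.card ι := finrank_euclideanSpace
  obtain ⟨B, hB⟩ := horth.exists_orthonormalBasis_extension_of_card_eq card_ι
  set W : Matrix ι κ ℂ := Matrix.of fun i j => (B (ψ j) : EuclideanSpace ℂ ι) i with hW
  have hWW : Wᴴ * W = 1 := by
    ext a b
    have h := (orthonormal_iff_ite (𝕜 := ℂ)).mp B.orthonormal (ψ a) (ψ b)
    rw [EuclideanSpace.inner_eq_star_dotProduct] at h
    simp only [dotProduct, Pi.star_apply] at h
    simp only [Matrix.mul_apply, Matrix.conjTranspose_apply, Matrix.one_apply, hW,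
      Matrix.of_apply]
    have h' : ∑ j, star ((B (ψ a)).ofLp j) * (B (ψ b)).ofLp j = if ψ a = ψ b then 1 else 0 := by
      rw [← h]; exact Finset.sum_congr rfl fun j _ => mul_comm _ _
    rw [h']
    simp [ψ.injective.eq_iff]
  have hYW : ∀ j i, Y i j = ((Real.sqrt (l j) : ℝ) : ℂ) * W i j := by
    intro j i
    by_cases hj0 : l j = 0
    · have h := congrFun (congrFun hGram j) j
      simp only [Matrix.mul_apply, Matrix.conjTranspose_apply, Matrix.diagonal_apply_eq,
        hj0, Complex.ofReal_zero] at h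
      have h2 : ∑ i, Complex.normSq (Y i j) = 0 := by
        have h3 : ((∑ i, Complex.normSq (Y i j) : ℝ) : ℂ) = 0 := by
          push_cast
          rw [← h]
          exact Finset.sum_congr rfl fun i _ => by
            rw [Complex.normSq_eq_conj_mul_self]; rfl
        exact_mod_cast h3
      have hz := (Finset.sum_eq_zero_iff_of_nonneg
        (fun i _ => Complex.normSq_nonneg (Y i j))).mp h2 i (Finset.mem_univ i)
      rw [Complex.normSq_eq_zero.mp hz, hj0]
      simp
    · have hmem : ψ j ∈ ψ '' s := ⟨j, hj0, rfl⟩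
      have hBj : B (ψ j) = f j := by rw [hB (ψ j) hmem, hvψ]
      have hWij : W i j = (((Real.sqrt (l j))⁻¹ : ℝ) : ℂ) * Y i j := by
        rw [hW]
        simp only [Matrix.of_apply, hBj, hf]
        rfl
      rw [hWij, ← mul_assoc, ← Complex.ofReal_mul]
      have hsq : Real.sqrt (l j) ≠ 0 := by
        have hpos : 0 < l j := lt_of_le_of_ne (hl j) (Ne.symm hj0)
        positivity
      rw [mul_inv_cancel₀ hsq]
      simp
  refine ⟨W, hWW, ?_⟩
  ext i i'
  rw [Matrix.mul_apply, Matrix.mul_apply]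
  refine Finset.sum_congr rfl fun j _ => ?_
  rw [Matrix.mul_diagonal, Matrix.conjTranspose_apply, Matrix.conjTranspose_apply,
    hYW j i, hYW j i']
  rw [star_mul', RCLike.star_def, Complex.conj_ofReal]
  have hll : ((Real.sqrt (l j) : ℝ) : ℂ) * ((Real.sqrt (l j) : ℝ) : ℂ) = ((l j : ℝ) : ℂ) := by
    rw [← Complex.ofReal_mul, Real.mul_self_sqrt (hl j)]
  calc ((Real.sqrt (l j) : ℝ) : ℂ) * W i j * (((Real.sqrt (l j) : ℝ) : ℂ) * star (W i' j))
      = (((Real.sqrt (l j) : ℝ) : ℂ) * ((Real.sqrt (l j) : ℝ) : ℂ)) * W i j * star (W i' j) := by ring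
    _ = W i j * ((l j : ℝ) : ℂ) * star (W i' j) := by rw [hll]; ring

lemma polar_ineq {ι κ : Type*} [Fintype ι] [Fintype κ] [DecidableEq ι] [DecidableEq κ]
    (hcard : Fintype.card κ ≤ Fintype.card ι) (X : Matrix ι κ ℂ) :
    ∃ U : Matrix ι κ ℂ, Uᴴ * U = 1 ∧ X * Xᴴ = U * (Xᴴ * X) * Uᴴ := by
  have hpsd := Matrix.posSemidef_conjTranspose_mul_self X
  have hH : (Xᴴ * X).IsHermitian := hpsd.1
  set V : Matrix κ κ ℂ := (Matrix.IsHermitian.eigenvectorUnitary hH : Matrix κ κ ℂ) with hVdef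
  set D : Matrix κ κ ℂ := diagonal (fun j => ((hH.eigenvalues j : ℝ) : ℂ)) with hDdef
  have hV1 : Vᴴ * V = 1 := by
    rw [← Matrix.star_eq_conjTranspose]
    exact Matrix.mem_unitaryGroup_iff'.mp (Matrix.IsHermitian.eigenvectorUnitary hH).2
  have hV2 : V * Vᴴ = 1 := by
    rw [← Matrix.star_eq_conjTranspose]
    exact Matrix.mem_unitaryGroup_iff.mp (Matrix.IsHermitian.eigenvectorUnitary hH).2
  have cancelk : ∀ (Z : Matrix κ κ ℂ), Vᴴ * (V * Z) = Z := by
    intro Z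
    rw [← Matrix.mul_assoc, hV1, Matrix.one_mul]
  have canceli : ∀ (Z : Matrix κ ι ℂ), Vᴴ * (V * Z) = Z := by
    intro Z
    rw [← Matrix.mul_assoc, hV1, Matrix.one_mul]
  have hspec : Xᴴ * X = V * D * Vᴴ := by
    have h := hH.spectral_theorem
    rw [Unitary.conjStarAlgAut_apply, Matrix.star_eq_conjTranspose] at h
    exact h
  set Y := X * V with hY
  have hGram : Yᴴ * Y = D := by
    rw [hY, Matrix.conjTranspose_mul, Matrix.mul_assoc, ← Matrix.mul_assoc Xᴴ X V, hspec]
    simp only [Matrix.mul_assoc]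
    rw [cancelk (D * (Vᴴ * V)), hV1, Matrix.mul_one]
  obtain ⟨W, hWW, hYY⟩ := ext_isometry hcard Y _ (fun j => hpsd.eigenvalues_nonneg j) hGram
  refine ⟨W * Vᴴ, ?_, ?_⟩
  · rw [Matrix.conjTranspose_mul, Matrix.conjTranspose_conjTranspose, Matrix.mul_assoc,
      ← Matrix.mul_assoc Wᴴ W Vᴴ, hWW, Matrix.one_mul, hV2]
  · have hXX : X * Xᴴ = Y * Yᴴ := by
      rw [hY, Matrix.conjTranspose_mul, Matrix.mul_assoc, ← Matrix.mul_assoc V Vᴴ Xᴴ, hV2,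
        Matrix.one_mul]
    rw [hXX, hYY]
    conv_rhs => rw [Matrix.conjTranspose_mul, Matrix.conjTranspose_conjTranspose, hspec]
    simp only [Matrix.mul_assoc]
    rw [canceli (D * (Vᴴ * (V * Wᴴ))), canceli Wᴴ]

open scoped MatrixOrder in
lemma part1 {d p : ℕ} {m : Fin p → ℕ}
    (bA : Matrix (Fin d) ((i : Fin p) × Fin (m i)) ℂ) :
    ∃ U : (i : Fin p) → Matrix ((i : Fin p) × Fin (m i)) (Fin (m i)) ℂ,
      (∀ i, (U i)ᴴ * U i = 1) ∧
      bAᴴ * bA = ∑ i, U i * ((colBlock bA i)ᴴ * colBlock bA i) * (U i)ᴴ := by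
  classical
  have hM : (bAᴴ * bA).PosSemidef := posSemidef_conjTranspose_mul_self bA
  set S := CFC.sqrt (bAᴴ * bA) with hSdef
  have hS : S.PosSemidef := (CFC.sqrt_nonneg _).posSemidef
  have hSH : Sᴴ = S := hS.1
  have hSS : S * S = bAᴴ * bA := CFC.sqrt_mul_sqrt_self _ hM.nonneg
  set E : ∀ i : Fin p, Matrix ((i : Fin p) × Fin (m i)) (Fin (m i)) ℂ :=
    fun i => Matrix.of (fun s c => if s = ⟨i, c⟩ then 1 else 0) with hE
  -- sum of E i * (E i)ᴴ is the identity
  have hEE : ∑ i, E i * (E i)ᴴ = (1 : Matrix _ _ ℂ) := by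
    ext s t
    rw [Matrix.sum_apply]
    have h1 : ∀ i, (E i * (E i)ᴴ) s t
        = ∑ c, (if s = ⟨i,c⟩ then 1 else 0) * (if t = ⟨i,c⟩ then (1:ℂ) else 0) := by
      intro i
      rw [Matrix.mul_apply]
      refine Finset.sum_congr rfl fun c _ => ?_
      rw [Matrix.conjTranspose_apply]
      simp [hE, apply_ite (star : ℂ → ℂ)]
    simp_rw [h1]
    rw [Finset.sum_sigma']
    rw [Matrix.one_apply]
    simp only [ite_mul, one_mul, zero_mul, Finset.univ_sigma_univ]
    rw [Finset.sum_ite_eq]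
    simp [eq_comm]
  -- entry extraction
  have lemA : ∀ (N : Matrix ((i : Fin p) × Fin (m i)) ((i : Fin p) × Fin (m i)) ℂ)
      (i : Fin p) (c c' : Fin (m i)),
      ((E i)ᴴ * (N * E i)) c c' = N ⟨i,c⟩ ⟨i,c'⟩ := by
    intro N i c c'
    rw [Matrix.mul_apply]
    have h2 : ∀ s, (N * E i) s c' = N s ⟨i,c'⟩ := by
      intro s
      rw [Matrix.mul_apply]
      simp [hE, mul_ite, mul_one, mul_zero]
    simp_rw [h2, Matrix.conjTranspose_apply]
    simp [hE, apply_ite (star : ℂ → ℂ)]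
  have hDD : ∀ i, (S * E i)ᴴ * (S * E i) = (colBlock bA i)ᴴ * colBlock bA i := by
    intro i
    have h3 : (S * E i)ᴴ * (S * E i) = (E i)ᴴ * ((bAᴴ * bA) * E i) := by
      rw [Matrix.conjTranspose_mul, hSH, Matrix.mul_assoc, ← Matrix.mul_assoc S S (E i), hSS]
    rw [h3]
    ext c c'
    rw [lemA]
    rw [Matrix.mul_apply, Matrix.mul_apply]
    refine Finset.sum_congr rfl fun r _ => ?_
    rw [Matrix.conjTranspose_apply, Matrix.conjTranspose_apply]
    rfl
  have hsumD : ∑ i, (S * E i) * (S * E i)ᴴ = bAᴴ * bA := by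
    have h4 : ∀ i, (S * E i) * (S * E i)ᴴ = S * (E i * (E i)ᴴ) * S := by
      intro i
      rw [Matrix.conjTranspose_mul, hSH]
      simp only [Matrix.mul_assoc]
    simp_rw [h4]
    rw [← Finset.sum_mul, ← Finset.mul_sum, hEE, Matrix.mul_one, hSS]
  have hcard : ∀ i : Fin p, Fintype.card (Fin (m i))
      ≤ Fintype.card ((i : Fin p) × Fin (m i)) := by
    intro i
    simp only [Fintype.card_sigma, Fintype.card_fin]
    exact Finset.single_le_sum (f := fun j => m j) (fun j _ => Nat.zero_le _)
      (Finset.mem_univ i)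
  choose U hU1 hU2 using fun i => polar_ineq (hcard i) (S * E i)
  refine ⟨U, hU1, ?_⟩
  rw [← hsumD]
  refine Finset.sum_congr rfl fun i _ => ?_
  rw [hU2 i, hDD i]

lemma part2 {d' : Type*} [Fintype d'] [DecidableEq d'] {p : ℕ}
    {κ : Fin p → Type*} [∀ i, Fintype (κ i)] [∀ i, DecidableEq (κ i)]
    {M : Matrix d' d' ℂ} (hM : M.PosSemidef)
    {N : ∀ i, Matrix (κ i) (κ i) ℂ} (hN : ∀ i, (N i).PosSemidef)
    (U : ∀ i, Matrix d' (κ i) ℂ) (hU : ∀ i, (U i)ᴴ * U i = 1)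
    (hsum : M = ∑ i, U i * N i * (U i)ᴴ)
    {r : ℝ} (hr : 1 ≤ r) :
    (∑ j, hM.1.eigenvalues j ^ r) ^ (1/r) ≤
      ∑ i, (∑ k, (hN i).1.eigenvalues k ^ r) ^ (1/r) := by
  classical
  have hr0 : (0:ℝ) < r := lt_of_lt_of_le one_pos hr
  set μ : d' → ℝ := hM.1.eigenvalues with hμdef
  have hμ0 : ∀ j, 0 ≤ μ j := fun j => hM.eigenvalues_nonneg j
  set ν : ∀ i, κ i → ℝ := fun i => (hN i).1.eigenvalues with hνdef
  have hν0 : ∀ i k, 0 ≤ ν i k := fun i k => (hN i).eigenvalues_nonneg k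
  suffices hgoal : (∑ j, μ j ^ r) ^ (1/r) ≤ ∑ i, (∑ k, ν i k ^ r) ^ (1/r) by
    simpa [hνdef, hμdef] using hgoal
  set V : Matrix d' d' ℂ := (Matrix.IsHermitian.eigenvectorUnitary hM.1 : Matrix d' d' ℂ) with hVdef
  have hV1 : Vᴴ * V = 1 := by
    rw [← Matrix.star_eq_conjTranspose]
    exact Matrix.mem_unitaryGroup_iff'.mp hM.1.eigenvectorUnitary.2
  have hV2 : V * Vᴴ = 1 := by
    rw [← Matrix.star_eq_conjTranspose]
    exact Matrix.mem_unitaryGroup_iff.mp hM.1.eigenvectorUnitary.2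
  set Dμ : Matrix d' d' ℂ := diagonal (fun j => ((μ j : ℝ) : ℂ)) with hDμ
  set Dμ' : Matrix d' d' ℂ := diagonal (fun j => ((μ j ^ (r-1) : ℝ) : ℂ)) with hDμ'
  have hspecM : M = V * Dμ * Vᴴ := by
    have h := hM.1.spectral_theorem
    rw [Unitary.conjStarAlgAut_apply, Matrix.star_eq_conjTranspose] at h
    exact h
  set X : Matrix d' d' ℂ := V * Dμ' * Vᴴ with hX
  have hmul : ∀ x : ℝ, 0 ≤ x → x * x ^ (r-1) = x ^ r := by
    intro x hx
    rcases eq_or_lt_of_le hx with h0 | hpos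
    · rw [← h0, Real.zero_rpow (ne_of_gt hr0), zero_mul]
    · nth_rewrite 1 [← Real.rpow_one x]
      rw [← Real.rpow_add hpos]
      norm_num
  -- (a) trace of M * X
  have ha : trace (M * X) = ((∑ j, μ j ^ r : ℝ) : ℂ) := by
    rw [hspecM, hX]
    have e : V * Dμ * Vᴴ * (V * Dμ' * Vᴴ) = V * (Dμ * Dμ') * Vᴴ := by
      simp only [Matrix.mul_assoc]
      rw [← Matrix.mul_assoc Vᴴ V (Dμ' * Vᴴ), hV1, Matrix.one_mul]
    rw [e, Matrix.trace_mul_comm (V * (Dμ * Dμ')) Vᴴ, ← Matrix.mul_assoc, hV1, Matrix.one_mul,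
      hDμ, hDμ', Matrix.diagonal_mul_diagonal, Matrix.trace_diagonal]
    push_cast
    refine Finset.sum_congr rfl fun j _ => ?_
    rw [← Complex.ofReal_mul, hmul (μ j) (hμ0 j)]
  -- spectral data for each block
  set W : ∀ i, Matrix (κ i) (κ i) ℂ := fun i => (Matrix.IsHermitian.eigenvectorUnitary (hN i).1 : Matrix (κ i) (κ i) ℂ) with hWdef
  have hW1 : ∀ i, (W i)ᴴ * W i = 1 := by
    intro i
    rw [← Matrix.star_eq_conjTranspose]
    exact Matrix.mem_unitaryGroup_iff'.mp (hN i).1.eigenvectorUnitary.2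
  have hW2 : ∀ i, W i * (W i)ᴴ = 1 := by
    intro i
    rw [← Matrix.star_eq_conjTranspose]
    exact Matrix.mem_unitaryGroup_iff.mp (hN i).1.eigenvectorUnitary.2
  set Dν : ∀ i, Matrix (κ i) (κ i) ℂ := fun i => diagonal (fun k => ((ν i k : ℝ) : ℂ)) with hDν
  have hspecN : ∀ i, N i = W i * Dν i * (W i)ᴴ := by
    intro i
    have h := (hN i).1.spectral_theorem
    rw [Unitary.conjStarAlgAut_apply, Matrix.star_eq_conjTranspose] at h
    exact h
  set Z : ∀ i, Matrix d' (κ i) ℂ := fun i => Vᴴ * (U i * W i) with hZdef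
  have hZ1 : ∀ i, (Z i)ᴴ * Z i = 1 := by
    intro i
    rw [hZdef]
    simp only [Matrix.conjTranspose_mul, Matrix.conjTranspose_conjTranspose]
    calc (W i)ᴴ * (U i)ᴴ * V * (Vᴴ * (U i * W i))
        = (W i)ᴴ * ((U i)ᴴ * ((V * Vᴴ) * (U i * W i))) := by simp only [Matrix.mul_assoc]
      _ = (W i)ᴴ * ((U i)ᴴ * (U i * W i)) := by rw [hV2, Matrix.one_mul]
      _ = (W i)ᴴ * (((U i)ᴴ * U i) * W i) := by simp only [Matrix.mul_assoc]
      _ = 1 := by rw [hU i, Matrix.one_mul, hW1 i]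
  -- (b) per-block trace
  have hb : ∀ i, trace ((U i * N i * (U i)ᴴ) * X)
      = ((∑ j, ∑ k, μ j ^ (r-1) * ν i k * Complex.normSq (Z i j k) : ℝ) : ℂ) := by
    intro i
    have s1 : (U i * N i * (U i)ᴴ) * X = (U i * W i) * (Dν i * ((W i)ᴴ * ((U i)ᴴ * X))) := by
      rw [hspecN i]
      simp only [Matrix.mul_assoc]
    have s2 : (Dν i * ((W i)ᴴ * ((U i)ᴴ * X))) * (U i * W i)
        = diagonal (fun k => ((ν i k : ℝ) : ℂ)) * (Z i)ᴴ
            * diagonal (fun j => ((μ j ^ (r-1) : ℝ) : ℂ)) * Z i := by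
      rw [hX, hZdef]
      simp only [hDν, hDμ', Matrix.conjTranspose_mul, Matrix.conjTranspose_conjTranspose]
      simp only [Matrix.mul_assoc]
    rw [s1, Matrix.trace_mul_comm, s2, trace_diag]
  -- combine
  have hMX2 : trace (M * X) = ∑ i, trace ((U i * N i * (U i)ᴴ) * X) := by
    have e : M * X = ∑ i, (U i * N i * (U i)ᴴ) * X := by
      rw [← Finset.sum_mul, ← hsum]
    rw [e, Matrix.trace_sum]
  have hcast : ((∑ j, μ j ^ r : ℝ) : ℂ)
      = ∑ i, ((∑ j, ∑ k, μ j ^ (r-1) * ν i k * Complex.normSq (Z i j k) : ℝ) : ℂ) := by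
    rw [← ha, hMX2]
    exact Finset.sum_congr rfl fun i _ => hb i
  have main : (∑ j, μ j ^ r)
      = ∑ i, ∑ j, ∑ k, μ j ^ (r-1) * ν i k * Complex.normSq (Z i j k) := by
    exact_mod_cast hcast
  -- conclude
  set Ssum := ∑ j, μ j ^ r with hSsum
  have hS0 : 0 ≤ Ssum := Finset.sum_nonneg fun j _ => Real.rpow_nonneg (hμ0 j) r
  have hSi0 : ∀ i, (0:ℝ) ≤ (∑ k, ν i k ^ r) ^ (1/r) := fun i =>
    Real.rpow_nonneg (Finset.sum_nonneg fun k _ => Real.rpow_nonneg (hν0 i k) r) _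
  have hbound : Ssum ≤ (∑ i, (∑ k, ν i k ^ r) ^ (1/r)) * Ssum ^ (1 - 1/r) := by
    calc Ssum = ∑ i, ∑ j, ∑ k, μ j ^ (r-1) * ν i k * Complex.normSq (Z i j k) := main
      _ ≤ ∑ i, (∑ k, ν i k ^ r) ^ (1/r) * Ssum ^ (1 - 1/r) := Finset.sum_le_sum fun i _ =>
          key_scalar hr (fun j k => Complex.normSq (Z i j k))
            (fun j k => Complex.normSq_nonneg _)
            (fun j => rowsum_normSq (hZ1 i) j) (fun k => (colsum_normSq (hZ1 i) k).le)
            μ hμ0 (ν i) (hν0 i)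
      _ = (∑ i, (∑ k, ν i k ^ r) ^ (1/r)) * Ssum ^ (1 - 1/r) := (Finset.sum_mul _ _ _).symm
  rcases eq_or_lt_of_le hS0 with h0 | hpos
  · rw [← h0, Real.zero_rpow (one_div_ne_zero (ne_of_gt hr0))]
    exact Finset.sum_nonneg fun i _ => hSi0 i
  · have hdecomp : Ssum = Ssum ^ ((1:ℝ)/r) * Ssum ^ (1 - 1/r) := by
      rw [← Real.rpow_add hpos]
      norm_num
    nth_rewrite 1 [hdecomp] at hbound
    exact (mul_le_mul_iff_left₀ (Real.rpow_pos_of_pos hpos (1 - 1/r))).mp hbound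


/-- **A Pythagorean theorem for column partitions (Bourin–Lee).** If
`bA = [C_1 … C_p]` is partitioned into column blocks, then
`|bA|² = Σᵢ Uᵢ |Cᵢ|² Uᵢ*` for some isometries `Uᵢ`; consequently for every
Schatten `q`-norm with `q ≥ 2`, `‖bA‖_q² ≤ Σᵢ ‖Cᵢ‖_q²`. -/
theorem pythagoras_column_blocks {d p : ℕ} {m : Fin p → ℕ}
    (bA : Matrix (Fin d) ((i : Fin p) × Fin (m i)) ℂ) :
    (∃ U : (i : Fin p) → Matrix ((i : Fin p) × Fin (m i)) (Fin (m i)) ℂ,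
      (∀ i, (U i)ᴴ * U i = 1) ∧
      bAᴴ * bA = ∑ i, U i * ((colBlock bA i)ᴴ * colBlock bA i) * (U i)ᴴ) ∧
    ∀ q : ℝ, 2 ≤ q →
      schattenNorm q bA ^ 2 ≤ ∑ i, schattenNorm q (colBlock bA i) ^ 2 := by
  obtain ⟨U, hU, hsum⟩ := part1 bA
  refine ⟨⟨U, hU, hsum⟩, fun q hq => ?_⟩
  have hq0 : (0:ℝ) < q := by linarith
  have hM : (bAᴴ * bA).PosSemidef := posSemidef_conjTranspose_mul_self bA
  have hN : ∀ i, ((colBlock bA i)ᴴ * colBlock bA i).PosSemidef :=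
    fun i => posSemidef_conjTranspose_mul_self _
  have hr : (1:ℝ) ≤ q / 2 := by linarith
  have key := part2 hM hN U hU hsum hr
  have hexp : (1/q) * ((2:ℕ):ℝ) = 1/(q/2) := by
    push_cast
    field_simp
  have hSM : schattenNorm q bA ^ 2 = (∑ j, hM.1.eigenvalues j ^ (q/2)) ^ (1/(q/2)) := by
    rw [schattenNorm]
    have hher : herEigs (bAᴴ * bA) = hM.1.eigenvalues := by
      rw [herEigs, dif_pos hM.1]
    rw [hher]
    have hS0 : (0:ℝ) ≤ ∑ j, hM.1.eigenvalues j ^ (q/2) :=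
      Finset.sum_nonneg fun j _ => Real.rpow_nonneg (hM.eigenvalues_nonneg j) _
    rw [← Real.rpow_natCast _ 2, ← Real.rpow_mul hS0, hexp]
  have hSN : ∀ i, schattenNorm q (colBlock bA i) ^ 2
      = (∑ k, (hN i).1.eigenvalues k ^ (q/2)) ^ (1/(q/2)) := by
    intro i
    rw [schattenNorm]
    have hher : herEigs ((colBlock bA i)ᴴ * colBlock bA i) = (hN i).1.eigenvalues := by
      rw [herEigs, dif_pos (hN i).1]
    rw [hher]
    have hS0 : (0:ℝ) ≤ ∑ k, (hN i).1.eigenvalues k ^ (q/2) :=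
      Finset.sum_nonneg fun k _ => Real.rpow_nonneg ((hN i).eigenvalues_nonneg k) _
    rw [← Real.rpow_natCast _ 2, ← Real.rpow_mul hS0, hexp]
  rw [hSM]
  calc (∑ j, hM.1.eigenvalues j ^ (q/2)) ^ (1/(q/2))
      ≤ ∑ i, (∑ k, (hN i).1.eigenvalues k ^ (q/2)) ^ (1/(q/2)) := key
    _ = ∑ i, schattenNorm q (colBlock bA i) ^ 2 :=
        Finset.sum_congr rfl fun i _ => (hSN i).symm
end

section
/- Let A ∈ M_d(ℂ) be normal, h a unit vector, S = h^⊥ the orthogonal hyperplane, and A_S the compression of A to S. Set β = ‖Ah‖² − |⟨h, Ah⟩|². Then for every j = 1, …, d−1, μ_j(A)² ≥ μ_j(A_S)² ≥ μ_{j+1}(A)² − β, where μ_j denotes the j-th largest singular value. -/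
open Matrix ComplexOrder

section Helpers
variable {n m : ℕ}

lemma dot_conj_mul (X : Matrix (Fin m) (Fin n) ℂ) (x : Fin n → ℂ) :
    star (X *ᵥ x) ⬝ᵥ (X *ᵥ x) = star x ⬝ᵥ ((Xᴴ * X) *ᵥ x) := by
  rw [star_mulVec, ← dotProduct_mulVec, mulVec_mulVec]

lemma dot_self_re (x : Fin n → ℂ) :
    (star x ⬝ᵥ x).re = ∑ i, Complex.normSq (x i) := by
  rw [dotProduct, Complex.re_sum]
  refine Finset.sum_congr rfl fun i _ => ?_
  simp [Pi.star_apply, ← Complex.normSq_eq_conj_mul_self]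

lemma dot_self_re_pos {x : Fin n → ℂ} (hx : x ≠ 0) : 0 < (star x ⬝ᵥ x).re := by
  rw [dot_self_re]
  obtain ⟨i, hi⟩ := Function.ne_iff.mp hx
  exact Finset.sum_pos' (fun j _ => Complex.normSq_nonneg _)
    ⟨i, Finset.mem_univ i, Complex.normSq_pos.2 hi⟩

lemma quad_re (U : Matrix (Fin n) (Fin n) ℂ) (ν : Fin n → ℝ) (x : Fin n → ℂ) :
    (star x ⬝ᵥ ((U * Matrix.diagonal (fun i => (ν i : ℂ)) * Uᴴ) *ᵥ x)).re
      = ∑ i, ν i * Complex.normSq ((Uᴴ *ᵥ x) i) := by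
  have h1 : (U * Matrix.diagonal (fun i => (ν i : ℂ)) * Uᴴ) *ᵥ x
      = U *ᵥ (Matrix.diagonal (fun i => (ν i : ℂ)) *ᵥ (Uᴴ *ᵥ x)) := by
    simp [mulVec_mulVec, Matrix.mul_assoc]
  rw [h1, dotProduct_mulVec]
  have h2 : star x ᵥ* U = star (Uᴴ *ᵥ x) := by
    rw [star_mulVec, conjTranspose_conjTranspose]
  rw [h2, dotProduct, Complex.re_sum]
  refine Finset.sum_congr rfl fun i _ => ?_
  rw [mulVec_diagonal]
  have : star (Uᴴ *ᵥ x) i * ((ν i : ℂ) * (Uᴴ *ᵥ x) i)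
      = (ν i : ℂ) * ((Complex.normSq ((Uᴴ *ᵥ x) i) : ℝ) : ℂ) := by
    have hs : star (Uᴴ *ᵥ x) i * (Uᴴ *ᵥ x) i
        = ((Complex.normSq ((Uᴴ *ᵥ x) i) : ℝ) : ℂ) := by
      simp [Pi.star_apply, Complex.star_def, ← Complex.normSq_eq_conj_mul_self]
    calc star (Uᴴ *ᵥ x) i * ((ν i : ℂ) * (Uᴴ *ᵥ x) i)
        = (ν i : ℂ) * (star (Uᴴ *ᵥ x) i * (Uᴴ *ᵥ x) i) := by ring
      _ = _ := by rw [hs]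
  rw [this, ← Complex.ofReal_mul, Complex.ofReal_re]

end Helpers


section Helpers2
variable {n d : ℕ}

lemma vecMulVec_mulVec' (h s y : Fin d → ℂ) :
    Matrix.vecMulVec h s *ᵥ y = (s ⬝ᵥ y) • h := by
  funext i
  simp [Matrix.vecMulVec, mulVec, dotProduct, Finset.mul_sum, mul_comm, mul_left_comm]

lemma dot_proj {V : Matrix (Fin d) (Fin (d-1)) ℂ} {h : Fin d → ℂ}
    (hVV : V * Vᴴ + Matrix.vecMulVec h (star h) = 1) (y : Fin d → ℂ) :
    star (Vᴴ *ᵥ y) ⬝ᵥ (Vᴴ *ᵥ y)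
      = star y ⬝ᵥ y - ((Complex.normSq (star h ⬝ᵥ y) : ℝ) : ℂ) := by
  have h0 := dot_conj_mul Vᴴ y
  rw [conjTranspose_conjTranspose] at h0
  have h1 : V * Vᴴ = 1 - Matrix.vecMulVec h (star h) := by
    rw [← hVV]; abel
  rw [h0, h1, Matrix.sub_mulVec, dotProduct_sub, Matrix.one_mulVec]
  congr 1
  rw [vecMulVec_mulVec', dotProduct_smul]
  have hy : star y ⬝ᵥ h = star (star h ⬝ᵥ y) := by
    rw [star_dotProduct]
  rw [smul_eq_mul, hy]

  rw [show star h ⬝ᵥ y * star (star h ⬝ᵥ y)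
      = ((Complex.normSq (star h ⬝ᵥ y) : ℝ) : ℂ) from by
    simp [Complex.star_def, Complex.mul_conj]]

lemma card_subtype_lt {k : ℕ} (hk : k ≤ n) :
    Fintype.card {j : Fin n // (j : ℕ) < k} = k := by
  rw [Fintype.card_congr (⟨fun j => (⟨j.1.1, j.2⟩ : Fin k),
    fun i => ⟨⟨i.1, lt_of_lt_of_le i.2 hk⟩, i.2⟩,
    fun j => by ext; rfl, fun i => by ext; rfl⟩ :
      {j : Fin n // (j : ℕ) < k} ≃ Fin k), Fintype.card_fin]

lemma card_subtype_gt (k : ℕ) :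
    Fintype.card {j : Fin n // k < (j : ℕ)} = n - k - 1 := by
  rw [Fintype.card_congr (⟨fun j => (⟨j.1.1 - k - 1, by have := j.1.2; have := j.2; omega⟩ :
      Fin (n - k - 1)),
    fun i => ⟨⟨i.1 + k + 1, by have := i.2; omega⟩, by simp⟩,
    fun j => Subtype.ext (Fin.ext (by have := j.2; simp; omega)),
    fun i => Fin.ext (by simp; omega)⟩ :
      {j : Fin n // k < (j : ℕ)} ≃ Fin (n - k - 1)), Fintype.card_fin]

/-- The subspace of `x` whose `Uᴴ`-coordinates vanish on `p`. -/
noncomputable def coordKer (U : Matrix (Fin n) (Fin n) ℂ) (p : Fin n → Prop)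
    [DecidablePred p] : Submodule ℂ (Fin n → ℂ) :=
  LinearMap.ker ((LinearMap.funLeft ℂ ℂ (Subtype.val : {j : Fin n // p j} → Fin n)).comp
    (Matrix.mulVecLin Uᴴ))

lemma mem_coordKer {U : Matrix (Fin n) (Fin n) ℂ} {p : Fin n → Prop} [DecidablePred p]
    {x : Fin n → ℂ} : x ∈ coordKer U p ↔ ∀ j, p j → (Uᴴ *ᵥ x) j = 0 := by
  simp only [coordKer, LinearMap.mem_ker, LinearMap.comp_apply, Matrix.mulVecLin_apply,
    LinearMap.funLeft_apply, funext_iff]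
  constructor
  · intro hx j hj; exact hx ⟨j, hj⟩
  · intro hx j; exact hx j.1 j.2

lemma finrank_coordKer {U : Matrix (Fin n) (Fin n) ℂ} (hU1 : Uᴴ * U = 1)
    (p : Fin n → Prop) [DecidablePred p] :
    Module.finrank ℂ (coordKer U p) = n - Fintype.card {j : Fin n // p j} := by
  have hsurj : Function.Surjective ((LinearMap.funLeft ℂ ℂ
      (Subtype.val : {j : Fin n // p j} → Fin n)).comp (Matrix.mulVecLin Uᴴ)) := by
    rw [LinearMap.coe_comp]
    apply Function.Surjective.comp
    · exact LinearMap.funLeft_surjective_of_injective ℂ ℂ _ Subtype.val_injective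
    · intro y
      exact ⟨U *ᵥ y, by rw [Matrix.mulVecLin_apply, mulVec_mulVec, hU1, Matrix.one_mulVec]⟩
  have := LinearMap.finrank_range_add_finrank_ker
    ((LinearMap.funLeft ℂ ℂ (Subtype.val : {j : Fin n // p j} → Fin n)).comp
      (Matrix.mulVecLin Uᴴ))
  rw [LinearMap.range_eq_top.2 hsurj, finrank_top] at this
  have h1 : Module.finrank ℂ (Fin n → ℂ) = n := Module.finrank_fin_fun ℂ
  have h2 : Module.finrank ℂ ({j : Fin n // p j} → ℂ)
      = Fintype.card {j : Fin n // p j} := Module.finrank_pi ℂ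
  unfold coordKer
  omega

end Helpers2

/-- The `k`-th largest singular value (`0`-indexed) of a square matrix, with
the convention that it is `0` when `k` exceeds the size: the `k`-th entry of
the decreasingly sorted list of square roots of the eigenvalues of `XᴴX`. -/
noncomputable def sval {e : ℕ} (X : Matrix (Fin e) (Fin e) ℂ) (k : ℕ) : ℝ :=
  Real.sqrt ((((List.ofFn (herEigs (Xᴴ * X))).insertionSort (· ≥ ·)).getD k 0))

section Sorted
variable {n : ℕ}

lemma sorted_eigs (M : Matrix (Fin n) (Fin n) ℂ) (hM : M.IsHermitian) :
    ∃ (U : Matrix (Fin n) (Fin n) ℂ) (ν : Fin n → ℝ),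
      Uᴴ * U = 1 ∧ U * Uᴴ = 1 ∧
      M = U * Matrix.diagonal (fun i => (ν i : ℂ)) * Uᴴ ∧
      Antitone ν ∧
      ((List.ofFn (herEigs M)).insertionSort (· ≥ ·)) = List.ofFn ν ∧
      ∀ i, ∃ j, ν i = hM.eigenvalues j := by
  classical
  set f := hM.eigenvalues with hf
  set σ : Equiv.Perm (Fin n) := Fin.revPerm.trans (Tuple.sort f) with hσ
  set W : Matrix (Fin n) (Fin n) ℂ := (hM.eigenvectorUnitary : Matrix (Fin n) (Fin n) ℂ)
  have hW1 : Wᴴ * W = 1 := by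
    have := (Unitary.mem_iff.mp hM.eigenvectorUnitary.2).1
    simpa [Matrix.star_eq_conjTranspose] using this
  have hW2 : W * Wᴴ = 1 := by
    have := (Unitary.mem_iff.mp hM.eigenvectorUnitary.2).2
    simpa [Matrix.star_eq_conjTranspose] using this
  refine ⟨W.submatrix id σ, f ∘ σ, ?_, ?_, ?_, ?_, ?_, fun i => ⟨σ i, rfl⟩⟩
  · rw [conjTranspose_submatrix]
    have := Matrix.submatrix_mul_equiv Wᴴ W σ (Equiv.refl (Fin n)) σ
    simp only [Equiv.coe_refl] at this
    rw [this, hW1, Matrix.submatrix_one_equiv]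
  · rw [conjTranspose_submatrix]
    have := Matrix.submatrix_mul_equiv W Wᴴ (id : Fin n → Fin n) σ (id : Fin n → Fin n)
    rw [this, hW2]
    rfl
  · have hdiag : Matrix.diagonal (fun i => ((f (σ i) : ℝ) : ℂ))
        = (Matrix.diagonal (fun i => ((f i : ℝ) : ℂ))).submatrix σ σ := by
      rw [Matrix.submatrix_diagonal_equiv]; rfl
    rw [conjTranspose_submatrix]
    have e1 : W.submatrix id ⇑σ * Matrix.diagonal (fun i => ((f (σ i) : ℝ) : ℂ))
        = (W * Matrix.diagonal (fun i => ((f i : ℝ) : ℂ))).submatrix id σ := by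
      rw [hdiag]
      have := Matrix.submatrix_mul_equiv W (Matrix.diagonal (fun i => ((f i : ℝ) : ℂ)))
        (id : Fin n → Fin n) σ σ
      rw [← this]
    rw [show ((f ∘ σ) : Fin n → ℝ) = fun i => f (σ i) from rfl]
    rw [e1]
    have e2 := Matrix.submatrix_mul_equiv
      (W * Matrix.diagonal (fun i => ((f i : ℝ) : ℂ))) Wᴴ (id : Fin n → Fin n) σ
      (id : Fin n → Fin n)
    rw [e2]
    have : W * Matrix.diagonal (fun i => ((f i : ℝ) : ℂ)) * Wᴴ = M := by
      have hs := hM.spectral_theorem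
      rw [hs]; rfl
    rw [this]
    exact (Matrix.submatrix_id_id M).symm
  · intro i j hij
    have : σ = fun x => Tuple.sort f (Fin.rev x) := rfl
    simp only [Function.comp_apply, this]
    exact Tuple.monotone_sort f (by
      show Fin.rev j ≤ Fin.rev i
      exact Fin.rev_le_rev.mpr hij)
  · have hperm : List.Perm ((List.ofFn (herEigs M)).insertionSort (· ≥ ·))
        (List.ofFn (f ∘ σ)) := by
      have h1 : herEigs M = f := dif_pos hM
      rw [h1]
      exact (List.perm_insertionSort _ _).trans (Equiv.Perm.ofFn_comp_perm σ f).symm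
    refine List.Perm.eq_of_pairwise (fun a b _ _ h1 h2 => le_antisymm h2 h1) (List.pairwise_insertionSort _ _) ?_ hperm
    rw [List.pairwise_ofFn]
    intro i j hij
    show f (σ j) ≤ f (σ i)
    have : σ = fun x => Tuple.sort f (Fin.rev x) := rfl
    simp only [this]
    exact Tuple.monotone_sort f (Fin.rev_le_rev.mpr hij.le)

end Sorted

section CF
variable {n : ℕ}

lemma cf_exists_low {M U : Matrix (Fin n) (Fin n) ℂ} {ν : Fin n → ℝ}
    (hU1 : Uᴴ * U = 1) (hU2 : U * Uᴴ = 1)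
    (hMU : M = U * Matrix.diagonal (fun i => (ν i : ℂ)) * Uᴴ) (hν : Antitone ν)
    {k : ℕ} (hk : k < n) (W : Submodule ℂ (Fin n → ℂ)) (hW : k + 1 ≤ Module.finrank ℂ W) :
    ∃ x, x ∈ W ∧ x ≠ 0 ∧
      (star x ⬝ᵥ (M *ᵥ x)).re ≤ ν ⟨k, hk⟩ * (star x ⬝ᵥ x).re := by
  classical
  set K := coordKer U (fun j : Fin n => (j : ℕ) < k) with hK
  have hKrank : Module.finrank ℂ K = n - k := by
    rw [hK, finrank_coordKer hU1, card_subtype_lt hk.le]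
  have hdim : 0 < Module.finrank ℂ ↥(W ⊓ K) := by
    have hsum := Submodule.finrank_sup_add_finrank_inf_eq W K
    have hle : Module.finrank ℂ ↥(W ⊔ K) ≤ n := by
      have := Submodule.finrank_le (W ⊔ K)
      rwa [Module.finrank_fin_fun] at this
    omega
  have : Nontrivial ↥(W ⊓ K) := Module.nontrivial_of_finrank_pos hdim
  obtain ⟨⟨x, hxWK⟩, hxne⟩ := exists_ne (0 : ↥(W ⊓ K))
  have hx0 : x ≠ 0 := by
    intro hc; exact hxne (Subtype.ext (by simpa using hc))
  refine ⟨x, hxWK.1, hx0, ?_⟩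
  have hxK : ∀ j : Fin n, (j : ℕ) < k → (Uᴴ *ᵥ x) j = 0 := mem_coordKer.mp hxWK.2
  rw [hMU, quad_re]
  have hnorm : (star x ⬝ᵥ x).re = ∑ i, Complex.normSq ((Uᴴ *ᵥ x) i) := by
    have := dot_conj_mul Uᴴ x
    rw [conjTranspose_conjTranspose, hU2, Matrix.one_mulVec] at this
    rw [← this, dot_self_re]
  rw [hnorm, Finset.mul_sum]
  refine Finset.sum_le_sum fun i _ => ?_
  by_cases hik : (i : ℕ) < k
  · rw [hxK i hik]; simp
  · have : (⟨k, hk⟩ : Fin n) ≤ i := by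
      rw [Fin.le_def]; simpa using Nat.le_of_not_lt hik
    exact mul_le_mul_of_nonneg_right (hν this) (Complex.normSq_nonneg _)

lemma cf_exists_up {M U : Matrix (Fin n) (Fin n) ℂ} {ν : Fin n → ℝ}
    (hU1 : Uᴴ * U = 1) (hU2 : U * Uᴴ = 1)
    (hMU : M = U * Matrix.diagonal (fun i => (ν i : ℂ)) * Uᴴ) (hν : Antitone ν)
    {k : ℕ} (hk : k < n) :
    ∃ W : Submodule ℂ (Fin n → ℂ), k + 1 ≤ Module.finrank ℂ W ∧
      ∀ x ∈ W, ν ⟨k, hk⟩ * (star x ⬝ᵥ x).re ≤ (star x ⬝ᵥ (M *ᵥ x)).re := by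
  classical
  refine ⟨coordKer U (fun j : Fin n => k < (j : ℕ)), ?_, ?_⟩
  · rw [finrank_coordKer hU1, card_subtype_gt]
    omega
  · intro x hx
    have hxK : ∀ j : Fin n, k < (j : ℕ) → (Uᴴ *ᵥ x) j = 0 := mem_coordKer.mp hx
    rw [hMU, quad_re]
    have hnorm : (star x ⬝ᵥ x).re = ∑ i, Complex.normSq ((Uᴴ *ᵥ x) i) := by
      have := dot_conj_mul Uᴴ x
      rw [conjTranspose_conjTranspose, hU2, Matrix.one_mulVec] at this
      rw [← this, dot_self_re]
    rw [hnorm, Finset.mul_sum]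
    refine Finset.sum_le_sum fun i _ => ?_
    by_cases hik : k < (i : ℕ)
    · rw [hxK i hik]; simp
    · have : i ≤ (⟨k, hk⟩ : Fin n) := by
        rw [Fin.le_def]; simpa using Nat.le_of_not_lt hik
      exact mul_le_mul_of_nonneg_right (hν this) (Complex.normSq_nonneg _)

end CF

section Completion
variable {d : ℕ}

lemma vvh_complete (hd : d - 1 + 1 = d) (h : Fin d → ℂ) (hh : star h ⬝ᵥ h = 1)
    (V : Matrix (Fin d) (Fin (d-1)) ℂ) (hV : Vᴴ * V = 1) (hVh : Vᴴ *ᵥ h = 0) :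
    V * Vᴴ + Matrix.vecMulVec h (star h) = 1 := by
  classical
  set C : Matrix (Fin d) (Fin (d-1) ⊕ Fin 1) ℂ := Matrix.fromCols V (Matrix.replicateCol (Fin 1) h)
  have hCt : Cᴴ = Matrix.fromRows Vᴴ (Matrix.replicateCol (Fin 1) h)ᴴ :=
    Matrix.conjTranspose_fromCols_eq_fromRows_conjTranspose V _
  have hCC : Cᴴ * C = 1 := by
    rw [hCt, Matrix.fromRows_mul_fromCols]
    have b1 : Vᴴ * Matrix.replicateCol (Fin 1) h = 0 := by
      ext i j
      have : (Vᴴ * Matrix.replicateCol (Fin 1) h) i j = (Vᴴ *ᵥ h) i := by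
        simp [Matrix.mul_apply, Matrix.replicateCol_apply, Matrix.mulVec, dotProduct]
      rw [this, hVh]; rfl
    have b2 : (Matrix.replicateCol (Fin 1) h)ᴴ * V = 0 := by
      ext i j
      have : ((Matrix.replicateCol (Fin 1) h)ᴴ * V) i j = star (Vᴴ *ᵥ h) j := by
        rw [Matrix.star_mulVec]
        simp [Matrix.mul_apply, Matrix.replicateCol_apply, Matrix.vecMul, dotProduct,
          Matrix.conjTranspose_apply]
      rw [this, hVh]; simp
    have b3 : (Matrix.replicateCol (Fin 1) h)ᴴ * Matrix.replicateCol (Fin 1) h = 1 := by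
      ext i j
      have : ((Matrix.replicateCol (Fin 1) h)ᴴ * Matrix.replicateCol (Fin 1) h) i j = star h ⬝ᵥ h := by
        simp [Matrix.mul_apply, Matrix.replicateCol_apply, dotProduct,
          Matrix.conjTranspose_apply]
      rw [this, hh]
      have : i = j := Subsingleton.elim i j
      simp [this, Matrix.one_apply]
    rw [hV, b1, b2, b3, Matrix.fromBlocks_one]
  have hCC2 : C * Cᴴ = 1 := by
    have e : (Fin (d-1) ⊕ Fin 1) ≃ Fin d :=
      finSumFinEquiv.trans (finCongr hd)
    exact (Matrix.mul_eq_one_comm_of_equiv e).mp hCC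
  have expand : C * Cᴴ = V * Vᴴ + Matrix.vecMulVec h (star h) := by
    rw [hCt, Matrix.fromCols_mul_fromRows, Matrix.conjTranspose_replicateCol,
      Matrix.vecMulVec_eq (Fin 1)]
    rfl
  rw [← expand, hCC2]

lemma cs_dot {m : ℕ} (u x : Fin m → ℂ) :
    Complex.normSq (star u ⬝ᵥ x) ≤ (star u ⬝ᵥ u).re * (star x ⬝ᵥ x).re := by
  set u' : EuclideanSpace ℂ (Fin m) := (WithLp.equiv 2 (Fin m → ℂ)).symm u
  set x' : EuclideanSpace ℂ (Fin m) := (WithLp.equiv 2 (Fin m → ℂ)).symm x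
  have hui : inner ℂ u' x' = star u ⬝ᵥ x := by
    rw [EuclideanSpace.inner_eq_star_dotProduct, dotProduct_comm]; rfl
  have huu : inner ℂ u' u' = star u ⬝ᵥ u := by
    rw [EuclideanSpace.inner_eq_star_dotProduct, dotProduct_comm]; rfl
  have hxx : inner ℂ x' x' = star x ⬝ᵥ x := by
    rw [EuclideanSpace.inner_eq_star_dotProduct, dotProduct_comm]; rfl
  have hcs : ‖(inner ℂ u' x' : ℂ)‖ ≤ ‖u'‖ * ‖x'‖ := norm_inner_le_norm (𝕜 := ℂ) u' x'
  have h1 : Complex.normSq (star u ⬝ᵥ x) = ‖(inner ℂ u' x' : ℂ)‖ ^ 2 := by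
    rw [hui, Complex.sq_norm]
  have h2 : (star u ⬝ᵥ u).re = ‖u'‖ * ‖u'‖ := by
    rw [← huu, ← RCLike.re_to_complex]; exact inner_self_eq_norm_mul_norm u'
  have h3 : (star x ⬝ᵥ x).re = ‖x'‖ * ‖x'‖ := by
    rw [← hxx, ← RCLike.re_to_complex]; exact inner_self_eq_norm_mul_norm x'
  rw [h1, h2, h3]
  calc ‖(inner ℂ u' x' : ℂ)‖ ^ 2 ≤ (‖u'‖ * ‖x'‖) ^ 2 := by
        exact pow_le_pow_left₀ (norm_nonneg _) hcs 2
    _ = ‖u'‖ * ‖u'‖ * (‖x'‖ * ‖x'‖) := by ring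

end Completion

section Assembly
variable {d : ℕ}

lemma compress_norm {V : Matrix (Fin d) (Fin (d-1)) ℂ} (hV : Vᴴ * V = 1)
    (x : Fin (d-1) → ℂ) : star (V *ᵥ x) ⬝ᵥ (V *ᵥ x) = star x ⬝ᵥ x := by
  rw [dot_conj_mul, hV, Matrix.one_mulVec]

lemma compress_quad {A : Matrix (Fin d) (Fin d) ℂ}
    {V : Matrix (Fin d) (Fin (d-1)) ℂ} {h : Fin d → ℂ}
    (hVV : V * Vᴴ + Matrix.vecMulVec h (star h) = 1) (x : Fin (d-1) → ℂ) :
    star x ⬝ᵥ (((Vᴴ * A * V)ᴴ * (Vᴴ * A * V)) *ᵥ x)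
      = star (V *ᵥ x) ⬝ᵥ ((Aᴴ * A) *ᵥ (V *ᵥ x))
        - ((Complex.normSq (star h ⬝ᵥ (A *ᵥ (V *ᵥ x))) : ℝ) : ℂ) := by
  have h1 : (Vᴴ * A * V) *ᵥ x = Vᴴ *ᵥ (A *ᵥ (V *ᵥ x)) := by
    rw [mulVec_mulVec, mulVec_mulVec, Matrix.mul_assoc]
  rw [← dot_conj_mul (Vᴴ * A * V) x, h1, dot_proj hVV, dot_conj_mul A (V *ᵥ x)]

lemma hAVx_eq (A : Matrix (Fin d) (Fin d) ℂ) (V : Matrix (Fin d) (Fin (d-1)) ℂ)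
    (h : Fin d → ℂ) (x : Fin (d-1) → ℂ) :
    star h ⬝ᵥ (A *ᵥ (V *ᵥ x)) = star (Vᴴ *ᵥ (Aᴴ *ᵥ h)) ⬝ᵥ x := by
  rw [star_mulVec, star_mulVec, conjTranspose_conjTranspose, conjTranspose_conjTranspose,
    Matrix.vecMul_vecMul, ← dotProduct_mulVec, mulVec_mulVec]

lemma conj_quad_form (A : Matrix (Fin d) (Fin d) ℂ) (h : Fin d → ℂ) :
    star h ⬝ᵥ (Aᴴ *ᵥ h) = star (star h ⬝ᵥ (A *ᵥ h)) := by
  have e1 : star (Aᴴ *ᵥ h) ⬝ᵥ h = star h ⬝ᵥ (A *ᵥ h) := by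
    rw [star_mulVec, conjTranspose_conjTranspose, ← dotProduct_mulVec]
  rw [star_dotProduct h (Aᴴ *ᵥ h), e1]

lemma beta_eq {A : Matrix (Fin d) (Fin d) ℂ} (hA : A * Aᴴ = Aᴴ * A)
    {V : Matrix (Fin d) (Fin (d-1)) ℂ} {h : Fin d → ℂ}
    (hVV : V * Vᴴ + Matrix.vecMulVec h (star h) = 1) :
    (star (Vᴴ *ᵥ (Aᴴ *ᵥ h)) ⬝ᵥ (Vᴴ *ᵥ (Aᴴ *ᵥ h))).re
      = (star (A *ᵥ h) ⬝ᵥ (A *ᵥ h)).re - ‖star h ⬝ᵥ (A *ᵥ h)‖ ^ 2 := by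
  rw [dot_proj hVV]
  have e1 : star (Aᴴ *ᵥ h) ⬝ᵥ (Aᴴ *ᵥ h) = star (A *ᵥ h) ⬝ᵥ (A *ᵥ h) := by
    rw [dot_conj_mul Aᴴ h, conjTranspose_conjTranspose, hA, ← dot_conj_mul A h]
  rw [e1, conj_quad_form A h]
  have e2 : Complex.normSq (star (star h ⬝ᵥ (A *ᵥ h)))
      = ‖star h ⬝ᵥ (A *ᵥ h)‖ ^ 2 := by
    rw [Complex.sq_norm, Complex.star_def, Complex.normSq_conj]
  rw [e2, Complex.sub_re, Complex.ofReal_re]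

lemma sval_sq {e : ℕ} (X : Matrix (Fin e) (Fin e) ℂ) {ν : Fin e → ℝ}
    (hlist : (List.ofFn (herEigs (Xᴴ * X))).insertionSort (· ≥ ·) = List.ofFn ν)
    (hnn : ∀ i, 0 ≤ ν i) {j : ℕ} (hj : j < e) :
    sval X j ^ 2 = ν ⟨j, hj⟩ := by
  rw [sval, hlist]
  have hlen : j < (List.ofFn ν).length := by simpa using hj
  rw [List.getD_eq_getElem _ _ hlen, List.getElem_ofFn]
  exact Real.sq_sqrt (hnn _)

end Assembly

/-- **Singular values of the compression of a normal matrix onto a hyperplane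
(Bourin–Lee).** Let `A ∈ M_d(ℂ)` be normal, `h` a unit vector, and `V` an
isometric parametrization of the hyperplane `S = h^⊥` (so `VᴴV = I` and the
columns of `V` are orthogonal to `h`); let `A_S = Vᴴ A V` be the compression
of `A` to `S` and `β = ‖Ah‖² − |⟨h, Ah⟩|²`. Then for each `j = 1, …, d−1`
(here `k = j − 1` is the `0`-based index),
`μ_j(A)² ≥ μ_j(A_S)² ≥ μ_{j+1}(A)² − β`. -/
theorem sval_compression_hyperplane {d : ℕ}
    (A : Matrix (Fin d) (Fin d) ℂ) (hA : A * Aᴴ = Aᴴ * A)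
    (h : Fin d → ℂ) (hh : star h ⬝ᵥ h = 1)
    (V : Matrix (Fin d) (Fin (d - 1)) ℂ) (hV : Vᴴ * V = 1) (hVh : Vᴴ *ᵥ h = 0) :
    ∀ k : ℕ, k < d - 1 →
      sval (Vᴴ * A * V) k ^ 2 ≤ sval A k ^ 2 ∧
      sval A (k + 1) ^ 2 -
          ((star (A *ᵥ h) ⬝ᵥ (A *ᵥ h)).re - ‖star h ⬝ᵥ (A *ᵥ h)‖ ^ 2) ≤
        sval (Vᴴ * A * V) k ^ 2 := by
  intro k hk
  have hd1 : d - 1 + 1 = d := by omega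
  have hkd : k < d := by omega
  have hk1d : k + 1 < d := by omega
  set B : Matrix (Fin (d-1)) (Fin (d-1)) ℂ := Vᴴ * A * V with hB
  have hVV : V * Vᴴ + Matrix.vecMulVec h (star h) = 1 := vvh_complete hd1 h hh V hV hVh
  have hMH : (Aᴴ * A).IsHermitian := isHermitian_conjTranspose_mul_self A
  have hNH : (Bᴴ * B).IsHermitian := isHermitian_conjTranspose_mul_self B
  obtain ⟨UM, νM, hUM1, hUM2, hMdec, hνM, hMlist, hMeig⟩ := sorted_eigs (Aᴴ * A) hMH
  obtain ⟨UN, νN, hUN1, hUN2, hNdec, hνN, hNlist, hNeig⟩ := sorted_eigs (Bᴴ * B) hNH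
  have hνMnn : ∀ i, 0 ≤ νM i := fun i => by
    obtain ⟨j, hj⟩ := hMeig i
    rw [hj]; exact (posSemidef_conjTranspose_mul_self A).eigenvalues_nonneg j
  have hνNnn : ∀ i, 0 ≤ νN i := fun i => by
    obtain ⟨j, hj⟩ := hNeig i
    rw [hj]; exact (posSemidef_conjTranspose_mul_self B).eigenvalues_nonneg j
  have hsvalB : sval B k ^ 2 = νN ⟨k, hk⟩ := sval_sq B hNlist hνNnn hk
  have hsvalA : sval A k ^ 2 = νM ⟨k, hkd⟩ := sval_sq A hMlist hνMnn hkd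
  have hsvalA1 : sval A (k+1) ^ 2 = νM ⟨k+1, hk1d⟩ := sval_sq A hMlist hνMnn hk1d
  have hVinj : Function.Injective (Matrix.mulVecLin V) := by
    intro a b hab
    have : Vᴴ *ᵥ (V *ᵥ a) = Vᴴ *ᵥ (V *ᵥ b) := by
      simpa [Matrix.mulVecLin_apply] using congrArg (fun z => Vᴴ *ᵥ z) hab
    simpa [mulVec_mulVec, hV, Matrix.one_mulVec] using this
  -- quadratic form identity for B
  have hquadB : ∀ x : Fin (d-1) → ℂ,
      (star x ⬝ᵥ ((Bᴴ * B) *ᵥ x)).re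
        = (star (V *ᵥ x) ⬝ᵥ ((Aᴴ * A) *ᵥ (V *ᵥ x))).re
          - Complex.normSq (star (Vᴴ *ᵥ (Aᴴ *ᵥ h)) ⬝ᵥ x) := by
    intro x
    rw [hB, compress_quad hVV x, hAVx_eq A V h x, Complex.sub_re, Complex.ofReal_re]
  have hnormV : ∀ x : Fin (d-1) → ℂ,
      (star (V *ᵥ x) ⬝ᵥ (V *ᵥ x)).re = (star x ⬝ᵥ x).re := by
    intro x; rw [compress_norm hV x]
  constructor
  · -- part 1
    rw [hsvalB, hsvalA]
    obtain ⟨W, hWrank, hWlow⟩ := cf_exists_up hUN1 hUN2 hNdec hνN hk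
    set f := Matrix.mulVecLin V with hf
    have hWrank' : k + 1 ≤ Module.finrank ℂ ↥(W.map f) :=
      (Submodule.equivMapOfInjective f hVinj W).finrank_eq ▸ hWrank
    obtain ⟨y, hyW, hy0, hylow⟩ := cf_exists_low hUM1 hUM2 hMdec hνM hkd (W.map f) hWrank'
    obtain ⟨x, hxW, hxy⟩ := Submodule.mem_map.mp hyW
    have hyVx : y = V *ᵥ x := by rw [← hxy]; rfl
    have hx0 : x ≠ 0 := by
      rintro rfl
      exact hy0 (by rw [hyVx, Matrix.mulVec_zero])
    have hnx : 0 < (star x ⬝ᵥ x).re := dot_self_re_pos hx0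
    have c1 : νN ⟨k, hk⟩ * (star x ⬝ᵥ x).re ≤ (star x ⬝ᵥ ((Bᴴ * B) *ᵥ x)).re := hWlow x hxW
    have c2 : (star x ⬝ᵥ ((Bᴴ * B) *ᵥ x)).re
        ≤ (star y ⬝ᵥ ((Aᴴ * A) *ᵥ y)).re := by
      rw [hquadB x, hyVx]
      have := Complex.normSq_nonneg (star (Vᴴ *ᵥ (Aᴴ *ᵥ h)) ⬝ᵥ x)
      linarith
    have c3 : (star y ⬝ᵥ ((Aᴴ * A) *ᵥ y)).re ≤ νM ⟨k, hkd⟩ * (star y ⬝ᵥ y).re := hylow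
    have c4 : (star y ⬝ᵥ y).re = (star x ⬝ᵥ x).re := by rw [hyVx]; exact hnormV x
    rw [c4] at c3
    exact le_of_mul_le_mul_right (le_trans c1 (le_trans c2 c3)) hnx
  · -- part 2
    rw [hsvalB, hsvalA1, ← beta_eq hA hVV]
    set u : Fin (d-1) → ℂ := Vᴴ *ᵥ (Aᴴ *ᵥ h) with hu
    set βr : ℝ := (star u ⬝ᵥ u).re with hβr
    obtain ⟨W, hWrank, hWlow⟩ := cf_exists_up hUM1 hUM2 hMdec hνM hk1d
    set f := Matrix.mulVecLin V with hf
    have hcom : Module.finrank ℂ ↥(Submodule.comap f W)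
        = Module.finrank ℂ ↥(LinearMap.range f ⊓ W) := by
      rw [← Submodule.map_comap_eq f W]
      exact (Submodule.equivMapOfInjective f hVinj _).finrank_eq
    have hrange : Module.finrank ℂ ↥(LinearMap.range f) = d - 1 := by
      rw [LinearMap.finrank_range_of_inj hVinj, Module.finrank_fin_fun]
    have hsum := Submodule.finrank_sup_add_finrank_inf_eq (LinearMap.range f) W
    have hle : Module.finrank ℂ ↥(LinearMap.range f ⊔ W) ≤ d := by
      have := Submodule.finrank_le (LinearMap.range f ⊔ W)
      rwa [Module.finrank_fin_fun] at this
    have hWrank' : k + 1 ≤ Module.finrank ℂ ↥(Submodule.comap f W) := by omega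
    obtain ⟨x, hxW, hx0, hxup⟩ :=
      cf_exists_low hUN1 hUN2 hNdec hνN hk (Submodule.comap f W) hWrank'
    have hVxW : V *ᵥ x ∈ W := Submodule.mem_comap.mp hxW
    have hnx : 0 < (star x ⬝ᵥ x).re := dot_self_re_pos hx0
    have c1 : νM ⟨k+1, hk1d⟩ * (star x ⬝ᵥ x).re
        ≤ (star (V *ᵥ x) ⬝ᵥ ((Aᴴ * A) *ᵥ (V *ᵥ x))).re := by
      have := hWlow (V *ᵥ x) hVxW
      rwa [hnormV x] at this
    have c2 := hquadB x
    have c3 : Complex.normSq (star u ⬝ᵥ x) ≤ βr * (star x ⬝ᵥ x).re := cs_dot u x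
    have c4 : (star x ⬝ᵥ ((Bᴴ * B) *ᵥ x)).re ≤ νN ⟨k, hk⟩ * (star x ⬝ᵥ x).re := hxup
    have key : (νM ⟨k+1, hk1d⟩ - βr) * (star x ⬝ᵥ x).re ≤ νN ⟨k, hk⟩ * (star x ⬝ᵥ x).re := by
      rw [sub_mul]
      rw [hu] at c2
      linarith
    linarith [le_of_mul_le_mul_right key hnx]
end
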